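/- arXiv:cs/0607131 — 3 statements merged into one kernel-verified Lean document; each statement's English description precedes it below -/
import Mathlib

section
/- In the code-generation model with f = f^T, g1 = g1^T, g0 = g0^T, let C be a coalition of size c ≥ 1 and let y be the extremal strategy y_i = 1 if and only if Σ_{j∈C} X_{ji} ≥ 1 (output a 1 whenever the marking condition allows it). Then for every user j ∉ C: E[S_j] = 0 and Var(S_j) = m·(1 − (1/(π − 4t'))·∫_t^{1−t} p^{−1/2}·(1−p)^{c−1/2} dp). -/
open MeasureTheory ProbabilityTheory Real

noncomputable section

/-- Bernoulli measure on `Bool` with parameter `p`. -/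
def bern (p : ℝ) : Measure Bool :=
  ENNReal.ofReal p • Measure.dirac true + ENNReal.ofReal (1 - p) • Measure.dirac false

/-- The measure on `ℝ` with density `f` (w.r.t. Lebesgue measure). -/
def biasMeasure (f : ℝ → ℝ) : Measure ℝ :=
  MeasureTheory.volume.withDensity fun p => ENNReal.ofReal (f p)

/-- Joint law of the biases `p = (p_1,…,p_m)` (i.i.d. with density `f`) together with the
code matrix `X` whose entries `X j i` are, conditionally on `p`, independent
Bernoulli(`p i`). -/
def codeMeasure (n m : ℕ) (f : ℝ → ℝ) :
    Measure ((Fin m → ℝ) × (Fin n → Fin m → Bool)) :=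
  (Measure.pi fun _ : Fin m => biasMeasure f).bind fun p =>
    (Measure.dirac p).prod (Measure.pi fun _ : Fin n => Measure.pi fun i : Fin m => bern (p i))

/-- The accusation sum `S_j = Σ_i y_i · (g1 (p_i) if X_{ji} = 1, g0 (p_i) if X_{ji} = 0)`. -/
def accusation (m : ℕ) (g1 g0 : ℝ → ℝ) (p : Fin m → ℝ) (x : Fin m → Bool)
    (y : Fin m → Bool) : ℝ :=
  ∑ i, if y i then (if x i then g1 (p i) else g0 (p i)) else 0

def tprime (t : ℝ) : ℝ := Real.arcsin (Real.sqrt t)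

/-- Tardos' bias density (extended by `0` outside `[t, 1-t]`). -/
def fT (t : ℝ) (p : ℝ) : ℝ :=
  if p ∈ Set.Icc t (1 - t) then 1 / ((π - 4 * tprime t) * Real.sqrt (p * (1 - p))) else 0

/-- Tardos' accusation function `g1`. -/
def g1T (p : ℝ) : ℝ := Real.sqrt ((1 - p) / p)

/-- Tardos' accusation function `g0`. -/
def g0T (p : ℝ) : ℝ := - Real.sqrt (p / (1 - p))



lemma tprime_nonneg {t : ℝ} (ht0 : 0 ≤ t) : 0 ≤ tprime t :=
  Real.arcsin_nonneg.2 (Real.sqrt_nonneg t)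

lemma tprime_lt {t : ℝ} (ht : t < 1/2) (ht0 : 0 ≤ t) : tprime t < π/4 := by
  have h1 : Real.sqrt t < Real.sqrt (1/2) := Real.sqrt_lt_sqrt ht0 ht
  have h2 : Real.arcsin (Real.sqrt (1/2)) = π/4 := by
    have : Real.sqrt (1/2) = Real.sin (π/4) := by
      rw [Real.sin_pi_div_four]
      rw [show (1:ℝ)/2 = (Real.sqrt 2 / 2)^2 by
        rw [div_pow, Real.sq_sqrt (by norm_num)]; norm_num]
      exact Real.sqrt_sq (by positivity)
    rw [this, Real.arcsin_sin (by linarith [Real.pi_pos]) (by linarith [Real.pi_pos])]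
  calc tprime t < Real.arcsin (Real.sqrt (1/2)) := by
        apply Real.strictMonoOn_arcsin ?_ ?_ h1
        · constructor
          · linarith [Real.sqrt_nonneg t]
          · rw [show (1:ℝ) = Real.sqrt 1 by simp]
            exact Real.sqrt_le_sqrt (by linarith)
        · constructor
          · linarith [Real.sqrt_nonneg (1/2:ℝ)]
          · rw [show (1:ℝ) = Real.sqrt 1 by simp]
            exact Real.sqrt_le_sqrt (by norm_num)
    _ = π/4 := h2

lemma pi_sub_tprime_pos {t : ℝ} (ht : t ∈ Set.Ioo (0:ℝ) (1/2)) : 0 < π - 4 * tprime t := by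
  have := tprime_lt ht.2 ht.1.le
  linarith

lemma arcsin_sqrt_one_sub {t : ℝ} (ht0 : 0 ≤ t) (ht1 : t ≤ 1) :
    Real.arcsin (Real.sqrt (1 - t)) = π/2 - Real.arcsin (Real.sqrt t) := by
  have hc : Real.cos (Real.arcsin (Real.sqrt t)) = Real.sqrt (1 - t) := by
    rw [Real.cos_arcsin, Real.sq_sqrt ht0]
  have h1 : Real.arccos (Real.sqrt (1 - t)) = Real.arcsin (Real.sqrt t) := by
    rw [← hc, Real.arccos_cos (Real.arcsin_nonneg.2 (Real.sqrt_nonneg t))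
      (le_trans (Real.arcsin_le_pi_div_two _) (by linarith [Real.pi_pos]))]
  have := Real.arccos_eq_pi_div_two_sub_arcsin (Real.sqrt (1 - t))
  rw [h1] at this
  linarith

/-- The key calculus fact. -/
lemma integral_one_div_sqrt_mul {t : ℝ} (ht : t ∈ Set.Ioo (0:ℝ) (1/2)) :
    ∫ p in Set.Icc t (1-t), 1 / Real.sqrt (p * (1-p)) = π - 4 * tprime t := by
  obtain ⟨ht0, ht12⟩ := ht
  have hle : t ≤ 1 - t := by linarith
  have hsub : ∀ p ∈ Set.uIcc t (1-t), 0 < p ∧ p < 1 := by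
    intro p hp
    rw [Set.uIcc_of_le hle] at hp
    exact ⟨lt_of_lt_of_le ht0 hp.1, by linarith [hp.2]⟩
  have hderiv : ∀ p ∈ Set.uIcc t (1-t),
      HasDerivAt (fun p => 2 * Real.arcsin (Real.sqrt p)) (1 / Real.sqrt (p * (1-p))) p := by
    intro p hp
    obtain ⟨hp0, hp1⟩ := hsub p hp
    have hs0 : Real.sqrt p ≠ 0 := by
      have := Real.sqrt_pos.2 hp0; positivity
    have hs1 : Real.sqrt p ≠ 1 := by
      intro h
      have := Real.sq_sqrt hp0.le
      rw [h] at this; nlinarith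
    have hsm1 : Real.sqrt p ≠ -1 := by
      have := Real.sqrt_nonneg p; intro h; linarith
    have h1 : HasDerivAt (fun p => Real.arcsin (Real.sqrt p))
        (1 / Real.sqrt (1 - Real.sqrt p ^ 2) * (1 / (2 * Real.sqrt p))) p :=
      (Real.hasDerivAt_arcsin hsm1 hs1).comp p (Real.hasDerivAt_sqrt hp0.ne')
    have h2 := h1.const_mul (2:ℝ)
    refine h2.congr_deriv (Eq.symm ?_)
    rw [Real.sq_sqrt hp0.le]
    rw [show p * (1-p) = (1-p) * p by ring, Real.sqrt_mul (by linarith)]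
    have hs1p : Real.sqrt (1-p) ≠ 0 := by
      have := Real.sqrt_pos.2 (show (0:ℝ) < 1-p by linarith); positivity
    field_simp
  have hint : IntervalIntegrable (fun p => 1 / Real.sqrt (p * (1-p))) volume t (1-t) := by
    apply ContinuousOn.intervalIntegrable
    apply ContinuousOn.div continuousOn_const
    · exact (Real.continuous_sqrt.comp (by continuity)).continuousOn
    · intro p hp
      obtain ⟨hp0, hp1⟩ := hsub p hp
      have : 0 < p * (1-p) := by nlinarith
      have := Real.sqrt_pos.2 this
      positivity
  have key := intervalIntegral.integral_eq_sub_of_hasDerivAt hderiv hint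
  rw [intervalIntegral.integral_of_le hle] at key
  rw [MeasureTheory.integral_Icc_eq_integral_Ioc, key,
    arcsin_sqrt_one_sub ht0.le (by linarith)]
  unfold tprime
  ring



instance bern_finite (p : ℝ) : IsFiniteMeasure (bern p) := by
  constructor
  rw [bern]
  simp [Measure.add_apply]

lemma bern_isProb {p : ℝ} (h0 : 0 ≤ p) (h1 : p ≤ 1) : IsProbabilityMeasure (bern p) := by
  constructor
  rw [bern]
  simp [Measure.add_apply]
  rw [← ENNReal.ofReal_add h0 (by linarith)]
  norm_num

lemma bern_apply_singleton_true (p : ℝ) : bern p {true} = ENNReal.ofReal p := by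
  rw [bern]
  simp [Measure.add_apply, Measure.dirac_apply' _ (measurableSet_singleton _)]

lemma bern_apply_singleton_false (p : ℝ) : bern p {false} = ENNReal.ofReal (1-p) := by
  rw [bern]
  simp [Measure.add_apply, Measure.dirac_apply' _ (measurableSet_singleton _)]

lemma integral_bern {p : ℝ} (h0 : 0 ≤ p) (h1 : p ≤ 1) (h : Bool → ℝ) :
    ∫ b, h b ∂(bern p) = p * h true + (1 - p) * h false := by
  haveI : IsFiniteMeasure (ENNReal.ofReal p • Measure.dirac (true : Bool)) := by
    constructor; simp [ENNReal.ofReal_lt_top]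
  haveI : IsFiniteMeasure (ENNReal.ofReal (1-p) • Measure.dirac (false : Bool)) := by
    constructor; simp [ENNReal.ofReal_lt_top]
  rw [bern, integral_add_measure Integrable.of_finite Integrable.of_finite,
    integral_smul_measure, integral_smul_measure, integral_dirac, integral_dirac,
    ENNReal.toReal_ofReal h0, ENNReal.toReal_ofReal (by linarith)]
  simp [smul_eq_mul]

section PiFinite

variable {ι : Type*} [Fintype ι] [DecidableEq ι]
variable {β : Type*} [Fintype β] [MeasurableSpace β] [MeasurableSingletonClass β]

lemma prod_single' {M : Type*} [CommMonoid M] (i : ι) (F : ι → M) :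
    (∏ k, if k = i then F k else 1) = F i := by
  rw [Finset.prod_ite_eq' Finset.univ i F]
  simp

lemma prod_double' {M : Type*} [CommMonoid M] {i i' : ι} (hne : i ≠ i') (F G : ι → M) :
    (∏ k, if k = i then F k else if k = i' then G k else 1) = F i * G i' := by
  have step : ∀ k, (if k = i then F k else if k = i' then G k else 1)
      = (if k = i then F k else 1) * (if k = i' then G k else 1) := by
    intro k
    by_cases h1 : k = i
    · subst h1
      simp [fun h => hne h]
    · simp [h1]
  rw [Finset.prod_congr rfl (fun k _ => step k), Finset.prod_mul_distrib,
    prod_single', prod_single']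

lemma integral_pi_finite (μ : ι → Measure β) [∀ i, IsProbabilityMeasure (μ i)]
    (f : ι → β → ℝ) :
    ∫ x, ∏ i, f i (x i) ∂(Measure.pi μ) = ∏ i, ∫ b, f i b ∂(μ i) := by
  rw [integral_fintype Integrable.of_finite]
  simp only [measureReal_def]
  have hsing : ∀ x : ι → β, ((Measure.pi μ) {x}).toReal = ∏ i, ((μ i) {x i}).toReal := by
    intro x
    rw [← Set.univ_pi_singleton, Measure.pi_pi, ENNReal.toReal_prod]
  simp_rw [hsing, smul_eq_mul, ← Finset.prod_mul_distrib]
  have hre : ∀ i, ∫ b, f i b ∂(μ i) = ∑ b, ((μ i) {b}).toReal * f i b := by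
    intro i
    rw [integral_fintype Integrable.of_finite]
    simp [smul_eq_mul, measureReal_def]
  simp_rw [hre]
  rw [Finset.prod_univ_sum, Fintype.piFinset_univ]

lemma integral_pi_eval (μ : ι → Measure β) [∀ i, IsProbabilityMeasure (μ i)]
    (i : ι) (h : β → ℝ) :
    ∫ x, h (x i) ∂(Measure.pi μ) = ∫ b, h b ∂(μ i) := by
  have : ∀ x : ι → β, h (x i) = ∏ k, (if k = i then h (x k) else 1) := by
    intro x
    rw [prod_single' i (fun k => h (x k))]
  calc ∫ x, h (x i) ∂(Measure.pi μ)
      = ∫ x, ∏ k, (if k = i then h (x k) else (1:ℝ)) ∂(Measure.pi μ) := by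
        congr 1; ext x; exact this x
    _ = ∏ k, ∫ b, (if k = i then h b else (1:ℝ)) ∂(μ k) :=
        integral_pi_finite μ (fun k b => if k = i then h b else 1)
    _ = ∏ k, (if k = i then ∫ b, h b ∂(μ k) else 1) := by
        apply Finset.prod_congr rfl
        intro k _
        by_cases hk : k = i <;> simp [hk]
    _ = ∫ b, h b ∂(μ i) := prod_single' i (fun k => ∫ b, h b ∂(μ k))

lemma integral_pi_eval2 (μ : ι → Measure β) [∀ i, IsProbabilityMeasure (μ i)]
    {i i' : ι} (hne : i ≠ i') (h h' : β → ℝ) :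
    ∫ x, h (x i) * h' (x i') ∂(Measure.pi μ)
      = (∫ b, h b ∂(μ i)) * (∫ b, h' b ∂(μ i')) := by
  calc ∫ x, h (x i) * h' (x i') ∂(Measure.pi μ)
      = ∫ x, ∏ k, (if k = i then h (x k) else if k = i' then h' (x k) else (1:ℝ))
          ∂(Measure.pi μ) := by
        congr 1; ext x
        rw [prod_double' hne (fun k => h (x k)) (fun k => h' (x k))]
    _ = ∏ k, ∫ b, (if k = i then h b else if k = i' then h' b else (1:ℝ)) ∂(μ k) :=
        integral_pi_finite μ (fun k b => if k = i then h b else if k = i' then h' b else (1:ℝ))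
    _ = ∏ k, (if k = i then ∫ b, h b ∂(μ k) else if k = i' then ∫ b, h' b ∂(μ k) else 1) := by
        apply Finset.prod_congr rfl
        intro k _
        by_cases hk : k = i
        · subst hk; simp
        · by_cases hk' : k = i'
          · subst hk'; simp [hk]
          · simp [hk, hk']
    _ = (∫ b, h b ∂(μ i)) * (∫ b, h' b ∂(μ i')) :=
        prod_double' hne _ _

end PiFinite

section Inner

variable {n m : ℕ}

lemma bool_sup_true {C : Finset (Fin n)} {f : Fin n → Bool} (h : C.sup f = true) :
    ∃ j ∈ C, f j = true := by
  by_contra hcon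
  push_neg at hcon
  have hbot : C.sup f = ⊥ := (Finset.sup_eq_bot_iff f C).2 fun jj hjj => by
    cases hf : f jj with
    | false => simp [hf]
    | true => exact absurd hf (hcon jj hjj)
  rw [h] at hbot
  simp at hbot

lemma bool_sup_false {C : Finset (Fin n)} {f : Fin n → Bool} (h : C.sup f = false)
    {j : Fin n} (hj : j ∈ C) : f j = false := by
  have h2 : f j ≤ C.sup f := Finset.le_sup hj
  rw [h] at h2
  cases hf : f j with
  | false => rfl
  | true => rw [hf] at h2; exact absurd h2 (by decide)

lemma extremal_decomp (C : Finset (Fin n)) (j : Fin n) (hj : j ∉ C) (i : Fin m)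
    (h : Bool → ℝ) (x : Fin n → Fin m → Bool) :
    (if (C.sup fun j' => x j' i) then h (x j i) else 0)
      = (∏ j', (if j' = j then h (x j' i) else 1))
        - ∏ j', ((if j' = j then h (x j' i) else 1)
            * (if j' ∈ C then (if x j' i then 0 else 1) else 1)) := by
  rw [prod_single' j (fun j' => h (x j' i)), Finset.prod_mul_distrib,
    prod_single' j (fun j' => h (x j' i)), Finset.prod_ite_mem, Finset.univ_inter]
  cases hsup : (C.sup fun j' => x j' i) with
  | true =>
      obtain ⟨j₀, hj₀, hx⟩ := bool_sup_true hsup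
      rw [Finset.prod_eq_zero hj₀ (by rw [hx]; simp)]
      simp
  | false =>
      rw [Finset.prod_eq_one fun j' hj' => by rw [bool_sup_false hsup hj']; simp]
      simp

lemma inner_int (C : Finset (Fin n)) (j : Fin n) (hj : j ∉ C) (i : Fin m)
    (μ : Fin m → Measure Bool) [∀ k, IsProbabilityMeasure (μ k)] (h : Bool → ℝ) :
    ∫ x : Fin n → Fin m → Bool,
        (if (C.sup fun j' => x j' i) then h (x j i) else 0)
        ∂(Measure.pi fun _ : Fin n => Measure.pi μ)
      = (∫ b, h b ∂(μ i))
          * (1 - (∫ b, (if b then (0:ℝ) else 1) ∂(μ i)) ^ C.card) := by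
  have heval : ∀ g : Bool → ℝ,
      ∫ z : Fin m → Bool, g (z i) ∂(Measure.pi μ) = ∫ b, g b ∂(μ i) :=
    fun g => integral_pi_eval μ i g
  calc ∫ x : Fin n → Fin m → Bool,
        (if (C.sup fun j' => x j' i) then h (x j i) else 0)
        ∂(Measure.pi fun _ : Fin n => Measure.pi μ)
      = ∫ x : Fin n → Fin m → Bool,
          ((∏ j', (if j' = j then h (x j' i) else 1))
            - ∏ j', ((if j' = j then h (x j' i) else 1)
                * (if j' ∈ C then (if x j' i then 0 else 1) else 1)))
          ∂(Measure.pi fun _ : Fin n => Measure.pi μ) := by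
        congr 1; ext x; exact extremal_decomp C j hj i h x
    _ = (∫ x : Fin n → Fin m → Bool, ∏ j', (if j' = j then h (x j' i) else 1)
          ∂(Measure.pi fun _ : Fin n => Measure.pi μ))
        - ∫ x : Fin n → Fin m → Bool, ∏ j', ((if j' = j then h (x j' i) else 1)
                * (if j' ∈ C then (if x j' i then 0 else 1) else 1))
          ∂(Measure.pi fun _ : Fin n => Measure.pi μ) :=
        integral_sub Integrable.of_finite Integrable.of_finite
    _ = (∫ b, h b ∂(μ i))
          - (∫ b, h b ∂(μ i)) * (∫ b, (if b then (0:ℝ) else 1) ∂(μ i)) ^ C.card := by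
        rw [integral_pi_finite (fun _ => Measure.pi μ)
          (fun j' z => if j' = j then h (z i) else 1),
          integral_pi_finite (fun _ => Measure.pi μ)
          (fun j' z => (if j' = j then h (z i) else 1)
            * (if j' ∈ C then (if z i then 0 else 1) else 1))]
        congr 1
        · calc ∏ j', ∫ z : Fin m → Bool, (if j' = j then h (z i) else (1:ℝ)) ∂(Measure.pi μ)
              = ∏ j', (if j' = j then ∫ b, h b ∂(μ i) else 1) := by
                apply Finset.prod_congr rfl
                intro j' _
                by_cases hjj : j' = j
                · simp only [hjj, if_true]
                  exact heval h
                · simp [hjj]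
            _ = ∫ b, h b ∂(μ i) := prod_single' j _
        · calc ∏ j', ∫ z : Fin m → Bool, ((if j' = j then h (z i) else (1:ℝ))
                * (if j' ∈ C then (if z i then 0 else 1) else 1)) ∂(Measure.pi μ)
              = ∏ j', ((if j' = j then ∫ b, h b ∂(μ i) else 1)
                  * (if j' ∈ C then ∫ b, (if b then (0:ℝ) else 1) ∂(μ i) else 1)) := by
                apply Finset.prod_congr rfl
                intro j' _
                by_cases hjj : j' = j
                · subst hjj
                  simp only [if_true, hj, if_false, mul_one, one_mul, if_neg hj]
                  exact heval h
                · by_cases hjC : j' ∈ C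
                  · simp only [hjj, if_false, hjC, if_true, one_mul]
                    exact heval (fun b => if b then (0:ℝ) else 1)
                  · simp [hjj, hjC]
            _ = (∫ b, h b ∂(μ i))
                  * (∫ b, (if b then (0:ℝ) else 1) ∂(μ i)) ^ C.card := by
                rw [Finset.prod_mul_distrib, prod_single' j (fun _ => ∫ b, h b ∂(μ i)),
                  Finset.prod_ite_mem, Finset.univ_inter, Finset.prod_const]
    _ = _ := by ring

lemma vanish_aux (μ : Fin m → Measure Bool) [∀ k, IsProbabilityMeasure (μ k)]
    (j : Fin n) {i i' : Fin m} (hne : i ≠ i') (h h' : Bool → ℝ)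
    (hEh : ∫ b, h b ∂(μ i) = 0) (F : Fin n → (Fin m → Bool) → ℝ)
    (hFj : ∀ z, F j z = h (z i) * h' (z i')) :
    ∫ x : Fin n → Fin m → Bool, ∏ j', F j' (x j')
      ∂(Measure.pi fun _ : Fin n => Measure.pi μ) = 0 := by
  rw [integral_pi_finite (fun _ => Measure.pi μ) F]
  apply Finset.prod_eq_zero (Finset.mem_univ j)
  calc ∫ z, F j z ∂(Measure.pi μ)
      = ∫ z : Fin m → Bool, h (z i) * h' (z i') ∂(Measure.pi μ) := by
        congr 1; ext z; exact hFj z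
    _ = 0 := by rw [integral_pi_eval2 μ hne, hEh, zero_mul]

lemma inner_int_mul (C : Finset (Fin n)) (j : Fin n) (hj : j ∉ C) {i i' : Fin m}
    (hne : i ≠ i') (μ : Fin m → Measure Bool) [∀ k, IsProbabilityMeasure (μ k)]
    (h h' : Bool → ℝ) (hEh : ∫ b, h b ∂(μ i) = 0) :
    ∫ x : Fin n → Fin m → Bool,
        (if (C.sup fun j' => x j' i) then h (x j i) else 0)
        * (if (C.sup fun j' => x j' i') then h' (x j i') else 0)
        ∂(Measure.pi fun _ : Fin n => Measure.pi μ) = 0 := by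
  set A : Fin n → (Fin m → Bool) → ℝ := fun j' z => if j' = j then h (z i) else 1 with hA
  set B : Fin n → (Fin m → Bool) → ℝ := fun j' z => (if j' = j then h (z i) else 1)
    * (if j' ∈ C then (if z i then 0 else 1) else 1) with hB
  set A' : Fin n → (Fin m → Bool) → ℝ := fun j' z => if j' = j then h' (z i') else 1 with hA'
  set B' : Fin n → (Fin m → Bool) → ℝ := fun j' z => (if j' = j then h' (z i') else 1)
    * (if j' ∈ C then (if z i' then 0 else 1) else 1) with hB'
  have hpt : ∀ x : Fin n → Fin m → Bool,
      (if (C.sup fun j' => x j' i) then h (x j i) else 0)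
      * (if (C.sup fun j' => x j' i') then h' (x j i') else 0)
      = (∏ j', A j' (x j') * A' j' (x j')) - (∏ j', A j' (x j') * B' j' (x j'))
        - ((∏ j', B j' (x j') * A' j' (x j')) - ∏ j', B j' (x j') * B' j' (x j')) := by
    intro x
    simp only [hA, hB, hA', hB']
    rw [extremal_decomp C j hj i h x, extremal_decomp C j hj i' h' x]
    simp only [Finset.prod_mul_distrib]
    ring
  calc ∫ x : Fin n → Fin m → Bool,
        (if (C.sup fun j' => x j' i) then h (x j i) else 0)
        * (if (C.sup fun j' => x j' i') then h' (x j i') else 0)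
        ∂(Measure.pi fun _ : Fin n => Measure.pi μ)
      = ∫ x : Fin n → Fin m → Bool,
          ((∏ j', A j' (x j') * A' j' (x j')) - (∏ j', A j' (x j') * B' j' (x j'))
          - ((∏ j', B j' (x j') * A' j' (x j')) - ∏ j', B j' (x j') * B' j' (x j')))
          ∂(Measure.pi fun _ : Fin n => Measure.pi μ) := by
        congr 1; ext x; exact hpt x
    _ = 0 := by
        have v1 : ∫ x : Fin n → Fin m → Bool, ∏ j', A j' (x j') * A' j' (x j')
            ∂(Measure.pi fun _ : Fin n => Measure.pi μ) = 0 :=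
          vanish_aux μ j hne h h' hEh (fun j' z => A j' z * A' j' z)
            (fun z => by beta_reduce; simp [hA, hA'])
        have v2 : ∫ x : Fin n → Fin m → Bool, ∏ j', A j' (x j') * B' j' (x j')
            ∂(Measure.pi fun _ : Fin n => Measure.pi μ) = 0 :=
          vanish_aux μ j hne h h' hEh (fun j' z => A j' z * B' j' z)
            (fun z => by beta_reduce; simp [hA, hB', hj])
        have v3 : ∫ x : Fin n → Fin m → Bool, ∏ j', B j' (x j') * A' j' (x j')
            ∂(Measure.pi fun _ : Fin n => Measure.pi μ) = 0 :=
          vanish_aux μ j hne h h' hEh (fun j' z => B j' z * A' j' z)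
            (fun z => by beta_reduce; simp [hB, hA', hj])
        have v4 : ∫ x : Fin n → Fin m → Bool, ∏ j', B j' (x j') * B' j' (x j')
            ∂(Measure.pi fun _ : Fin n => Measure.pi μ) = 0 :=
          vanish_aux μ j hne h h' hEh (fun j' z => B j' z * B' j' z)
            (fun z => by beta_reduce; simp [hB, hB', hj])
        rw [integral_sub Integrable.of_finite Integrable.of_finite,
          integral_sub Integrable.of_finite Integrable.of_finite,
          integral_sub Integrable.of_finite Integrable.of_finite,
          v1, v2, v3, v4]
        ring

end Inner

section Plumbing

lemma measure_eq_tsum_indicator {X : Type*} [Countable X] [MeasurableSpace X]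
    [MeasurableSingletonClass X] (μ : Measure X) (A : Set X) :
    μ A = ∑' x, A.indicator (fun x => μ {x}) x := by
  rw [← tsum_subtype]
  conv_lhs => rw [← Set.biUnion_of_singleton A]
  exact measure_biUnion (Set.to_countable A) (fun a _ b _ hab => by
    simp [Function.onFun, Set.disjoint_singleton, hab])
    (fun b _ => measurableSet_singleton b)

lemma measurable_measure_family {α X : Type*} [MeasurableSpace α] [Countable X]
    [MeasurableSpace X] [MeasurableSingletonClass X] {κ : α → Measure X}
    (h : ∀ x : X, Measurable fun a => κ a {x}) : Measurable κ := by
  apply Measure.measurable_of_measurable_coe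
  intro s _
  simp_rw [measure_eq_tsum_indicator _ s]
  apply Measurable.ennreal_tsum
  intro x
  by_cases hx : x ∈ s
  · simpa [Set.indicator_of_mem hx] using h x
  · simp [Set.indicator_of_notMem hx]

noncomputable def clampReal (p : ℝ) : ℝ := max 0 (min 1 p)

lemma clampReal_mem (p : ℝ) : 0 ≤ clampReal p ∧ clampReal p ≤ 1 := by
  constructor
  · exact le_max_left _ _
  · exact max_le zero_le_one (min_le_left _ _)

lemma clampReal_eq {p : ℝ} (h0 : 0 ≤ p) (h1 : p ≤ 1) : clampReal p = p := by
  rw [clampReal, min_eq_right h1, max_eq_right h0]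

noncomputable def bern' (p : ℝ) : Measure Bool := bern (clampReal p)

instance bern'_prob (p : ℝ) : IsProbabilityMeasure (bern' p) :=
  bern_isProb (clampReal_mem p).1 (clampReal_mem p).2

lemma bern'_eq {p : ℝ} (h0 : 0 ≤ p) (h1 : p ≤ 1) : bern' p = bern p := by
  rw [bern', clampReal_eq h0 h1]

lemma measurable_bern_singleton (b : Bool) : Measurable fun q : ℝ => bern q {b} := by
  cases b
  · simp_rw [bern_apply_singleton_false]
    exact ENNReal.measurable_ofReal.comp (measurable_const.sub measurable_id)
  · simp_rw [bern_apply_singleton_true]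
    exact ENNReal.measurable_ofReal.comp measurable_id

lemma measurable_clampReal : Measurable clampReal :=
  (continuous_const.max (continuous_const.min continuous_id)).measurable

lemma measurable_bern'_singleton (b : Bool) : Measurable fun q : ℝ => bern' q {b} :=
  (measurable_bern_singleton b).comp measurable_clampReal

lemma measurable_code_singleton {n m : ℕ} (brn : ℝ → Measure Bool)
    [∀ q, IsFiniteMeasure (brn q)]
    (hb : ∀ b, Measurable fun q => brn q {b}) (x : Fin n → Fin m → Bool) :
    Measurable fun p : Fin m → ℝ =>
      (Measure.pi fun _ : Fin n => Measure.pi fun i => brn (p i)) {x} := by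
  have key : ∀ p : Fin m → ℝ,
      (Measure.pi fun _ : Fin n => Measure.pi fun i => brn (p i)) {x}
        = ∏ j', ∏ i, brn (p i) {x j' i} := by
    intro p
    rw [← Set.univ_pi_singleton, Measure.pi_pi]
    apply Finset.prod_congr rfl
    intro j' _
    rw [← Set.univ_pi_singleton, Measure.pi_pi]
  simp_rw [key]
  apply Finset.measurable_prod
  intro j' _
  apply Finset.measurable_prod
  intro i _
  exact (hb (x j' i)).comp (measurable_pi_apply i)

lemma measurable_pi_pi_bern' (n m : ℕ) :
    Measurable fun p : Fin m → ℝ =>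
      Measure.pi fun _ : Fin n => Measure.pi fun i => bern' (p i) :=
  measurable_measure_family fun x =>
    measurable_code_singleton bern' measurable_bern'_singleton x

lemma measurable_dirac_prod_family (n m : ℕ) :
    Measurable fun p : Fin m → ℝ =>
      (Measure.dirac p).prod
        (Measure.pi fun _ : Fin n => Measure.pi fun i : Fin m => bern (p i)) := by
  apply Measure.measurable_of_measurable_coe
  intro s hs
  have h1 : ∀ p : Fin m → ℝ,
      ((Measure.dirac p).prod
        (Measure.pi fun _ : Fin n => Measure.pi fun i : Fin m => bern (p i))) s
        = (Measure.pi fun _ : Fin n => Measure.pi fun i : Fin m => bern (p i))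
            (Prod.mk p ⁻¹' s) := by
    intro p
    rw [Measure.prod_apply hs, lintegral_dirac' _ (measurable_measure_prodMk_left hs)]
  have h1b : ∀ p : Fin m → ℝ,
      ((Measure.dirac p).prod
        (Measure.pi fun _ : Fin n => Measure.pi fun i : Fin m => bern (p i))) s
        = ∑' x, (Prod.mk p ⁻¹' s).indicator
            (fun x' => (Measure.pi fun _ : Fin n =>
              Measure.pi fun i : Fin m => bern (p i)) {x'}) x := by
    intro p
    rw [h1 p, measure_eq_tsum_indicator]
  simp_rw [h1b]
  apply Measurable.ennreal_tsum
  intro x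
  have h2 : ∀ p : Fin m → ℝ, (Prod.mk p ⁻¹' s).indicator
      (fun x' => (Measure.pi fun _ : Fin n => Measure.pi fun i : Fin m => bern (p i)) {x'}) x
      = Set.indicator {p' : Fin m → ℝ | (p', x) ∈ s}
          (fun p' => (Measure.pi fun _ : Fin n => Measure.pi fun i : Fin m => bern (p' i)) {x})
          p := by
    intro p
    by_cases hmem : (p, x) ∈ s
    · rw [Set.indicator_of_mem (show x ∈ Prod.mk p ⁻¹' s from hmem),
        Set.indicator_of_mem (show p ∈ {p' : Fin m → ℝ | (p', x) ∈ s} from hmem)]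
    · rw [Set.indicator_of_notMem (show x ∉ Prod.mk p ⁻¹' s from hmem),
        Set.indicator_of_notMem (show p ∉ {p' : Fin m → ℝ | (p', x) ∈ s} from hmem)]
  simp_rw [h2]
  apply Measurable.indicator
  · exact measurable_code_singleton bern measurable_bern_singleton x
  · exact (measurable_id.prodMk measurable_const) hs

noncomputable def codeKernel (n m : ℕ) : Kernel (Fin m → ℝ) (Fin n → Fin m → Bool) :=
  ⟨fun p => Measure.pi fun _ : Fin n => Measure.pi fun i => bern' (p i),
    measurable_pi_pi_bern' n m⟩

lemma codeKernel_apply (n m : ℕ) (p : Fin m → ℝ) :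
    codeKernel n m p = Measure.pi fun _ : Fin n => Measure.pi fun i => bern' (p i) := rfl

instance codeKernel_markov (n m : ℕ) : IsMarkovKernel (codeKernel n m) :=
  ⟨fun p => by rw [codeKernel_apply]; infer_instance⟩

end Plumbing

section Density

variable {t : ℝ}

lemma fT_nonneg (ht : t ∈ Set.Ioo (0:ℝ) (1/2)) (p : ℝ) : 0 ≤ fT t p := by
  rw [fT]
  split
  · exact div_nonneg zero_le_one
      (mul_nonneg (pi_sub_tprime_pos ht).le (Real.sqrt_nonneg _))
  · exact le_refl 0

lemma fT_measurable (t : ℝ) : Measurable (fT t) := by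
  apply Measurable.ite measurableSet_Icc
  · exact measurable_const.div
      ((Real.continuous_sqrt.measurable).comp
        (measurable_id.mul (measurable_const.sub measurable_id)) |>.const_mul _)
  · exact measurable_const

lemma fT_eq_indicator (t : ℝ) : fT t = Set.indicator (Set.Icc t (1-t))
    (fun p => 1 / ((π - 4 * tprime t) * Real.sqrt (p * (1-p)))) := by
  funext p
  by_cases h : p ∈ Set.Icc t (1-t) <;> simp [fT, h, Set.indicator]

lemma fT_integrable (ht : t ∈ Set.Ioo (0:ℝ) (1/2)) : Integrable (fT t) volume := by
  rw [fT_eq_indicator]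
  apply MeasureTheory.IntegrableOn.integrable_indicator _ measurableSet_Icc
  apply ContinuousOn.integrableOn_Icc
  apply ContinuousOn.div continuousOn_const
  · apply Continuous.continuousOn
    exact (continuous_const.mul (Real.continuous_sqrt.comp (by continuity)))
  · intro p hp
    have hp0 : 0 < p := lt_of_lt_of_le ht.1 hp.1
    have hp1 : p < 1 := by
      have h3 := hp.2
      have h4 := ht.2
      have h5 := ht.1
      linarith
    have h1 : 0 < Real.sqrt (p * (1-p)) := Real.sqrt_pos.2 (by nlinarith)
    have h2 := pi_sub_tprime_pos ht
    positivity

lemma integral_fT (ht : t ∈ Set.Ioo (0:ℝ) (1/2)) : ∫ p, fT t p = 1 := by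
  rw [fT_eq_indicator, MeasureTheory.integral_indicator measurableSet_Icc]
  have h2 := pi_sub_tprime_pos ht
  have : ∀ p : ℝ, 1 / ((π - 4 * tprime t) * Real.sqrt (p * (1-p)))
      = (π - 4 * tprime t)⁻¹ * (1 / Real.sqrt (p * (1-p))) := by
    intro p
    rw [one_div, mul_inv, ← one_div, one_div (Real.sqrt _), mul_comm]
  simp_rw [this]
  rw [MeasureTheory.integral_const_mul, integral_one_div_sqrt_mul ht]
  exact inv_mul_cancel₀ (ne_of_gt h2)

lemma bias_prob (ht : t ∈ Set.Ioo (0:ℝ) (1/2)) :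
    IsProbabilityMeasure (biasMeasure (fT t)) := by
  constructor
  rw [biasMeasure, withDensity_apply _ MeasurableSet.univ, Measure.restrict_univ,
    ← MeasureTheory.ofReal_integral_eq_lintegral_ofReal (fT_integrable ht)
      (Filter.Eventually.of_forall (fT_nonneg ht)),
    integral_fT ht]
  norm_num

lemma bias_ae (ht : t ∈ Set.Ioo (0:ℝ) (1/2)) :
    ∀ᵐ p ∂(biasMeasure (fT t)), p ∈ Set.Icc t (1-t) := by
  rw [ae_iff]
  have : {p : ℝ | ¬ p ∈ Set.Icc t (1-t)} = (Set.Icc t (1-t))ᶜ := rfl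
  rw [this, biasMeasure, withDensity_apply _ measurableSet_Icc.compl]
  rw [MeasureTheory.setLIntegral_congr_fun measurableSet_Icc.compl
    (fun p (hp : p ∈ (Set.Icc t (1-t))ᶜ) => by
      rw [show fT t p = 0 from if_neg hp, ENNReal.ofReal_zero])]
  simp

lemma pi_bias_ae (ht : t ∈ Set.Ioo (0:ℝ) (1/2)) (m : ℕ) :
    ∀ᵐ p ∂(Measure.pi fun _ : Fin m => biasMeasure (fT t)),
      ∀ i, p i ∈ Set.Icc t (1-t) := by
  haveI := bias_prob ht
  rw [ae_iff]
  have hsub : {p : Fin m → ℝ | ¬ ∀ i, p i ∈ Set.Icc t (1-t)}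
      ⊆ ⋃ i : Fin m, Function.eval i ⁻¹' (Set.Icc t (1-t))ᶜ := by
    intro p hp
    simp only [Set.mem_setOf_eq, not_forall] at hp
    obtain ⟨i, hi⟩ := hp
    exact Set.mem_iUnion.2 ⟨i, hi⟩
  apply measure_mono_null hsub
  · apply measure_iUnion_null
    intro i
    rw [Set.eval_preimage, Measure.pi_pi]
    apply Finset.prod_eq_zero (Finset.mem_univ i)
    rw [Function.update_self]
    have h0 : biasMeasure (fT t) (Set.Icc t (1-t))ᶜ = 0 := by
      have := bias_ae ht
      rw [ae_iff] at this
      exact this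
    exact h0

lemma pi_map_eval {ι : Type*} [Fintype ι] [DecidableEq ι] {α : Type*} [MeasurableSpace α]
    (μ : Measure α) [IsProbabilityMeasure μ] (i : ι) :
    (Measure.pi fun _ : ι => μ).map (Function.eval i) = μ := by
  ext s hs
  rw [Measure.map_apply (measurable_pi_apply i) hs, Set.eval_preimage, Measure.pi_pi]
  rw [Finset.prod_eq_single_of_mem i (Finset.mem_univ i)
    (fun b _ hb => by rw [Function.update_of_ne hb]; exact measure_univ)]
  rw [Function.update_self]

lemma integral_pi_eval_real {ι : Type*} [Fintype ι] [DecidableEq ι]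
    (μ : Measure ℝ) [IsProbabilityMeasure μ] (i : ι) {h : ℝ → ℝ} (hm : Measurable h) :
    ∫ p : ι → ℝ, h (p i) ∂(Measure.pi fun _ : ι => μ) = ∫ q, h q ∂μ := by
  rw [← pi_map_eval μ i, MeasureTheory.integral_map (measurable_pi_apply i).aemeasurable]
  rw [pi_map_eval μ i]
  exact hm.aestronglyMeasurable

lemma codeMeasure_eq (n m : ℕ) (ht : t ∈ Set.Ioo (0:ℝ) (1/2)) :
    codeMeasure n m (fT t)
      = (Measure.pi fun _ : Fin m => biasMeasure (fT t)) ⊗ₘ codeKernel n m := by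
  haveI := bias_prob ht
  ext s hs
  rw [codeMeasure, Measure.bind_apply hs (measurable_dirac_prod_family n m).aemeasurable,
    Measure.compProd_apply hs]
  apply lintegral_congr_ae
  filter_upwards [pi_bias_ae ht m] with p hp
  rw [Measure.prod_apply hs, lintegral_dirac' _ (measurable_measure_prodMk_left hs)]
  rw [codeKernel_apply]
  have hfun : (fun i => bern' (p i)) = fun i : Fin m => bern (p i) := by
    funext i
    have h1 := hp i
    have ht2 := ht.2
    have ht1 := ht.1
    exact bern'_eq (le_trans ht1.le h1.1) (le_trans h1.2 (by linarith))
  rw [hfun]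

end Density

section Values

lemma Eg_zero {q : ℝ} (hq0 : 0 < q) (hq1 : q < 1) :
    ∫ b, (if b then g1T q else g0T q) ∂(bern q) = 0 := by
  rw [integral_bern hq0.le hq1.le]
  simp only [if_true, Bool.false_eq_true, if_false]
  have h1 : q * g1T q = Real.sqrt (q * (1-q)) := by
    rw [g1T, show q * Real.sqrt ((1-q)/q) = Real.sqrt (q^2) * Real.sqrt ((1-q)/q) by
      rw [Real.sqrt_sq hq0.le], ← Real.sqrt_mul (sq_nonneg q)]
    congr 1
    field_simp [hq0.ne']
  have h2 : (1-q) * Real.sqrt (q/(1-q)) = Real.sqrt (q * (1-q)) := by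
    rw [show (1-q) * Real.sqrt (q/(1-q))
        = Real.sqrt ((1-q)^2) * Real.sqrt (q/(1-q)) by
      rw [Real.sqrt_sq (by linarith : (0:ℝ) ≤ 1-q)], ← Real.sqrt_mul (sq_nonneg (1-q))]
    congr 1
    field_simp [(show (1:ℝ)-q ≠ 0 by linarith)]
  have h3 : (1-q) * g0T q = -Real.sqrt (q * (1-q)) := by
    rw [g0T, mul_neg, h2]
  linarith [h1, h3]

lemma Eg_sq {q : ℝ} (hq0 : 0 < q) (hq1 : q < 1) :
    ∫ b, ((if b then g1T q else g0T q) * (if b then g1T q else g0T q)) ∂(bern q) = 1 := by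
  rw [integral_bern hq0.le hq1.le]
  simp only [if_true, Bool.false_eq_true, if_false]
  have h1 : g1T q * g1T q = (1-q)/q := by
    rw [g1T, Real.mul_self_sqrt (div_nonneg (by linarith) hq0.le)]
  have h2 : g0T q * g0T q = q/(1-q) := by
    rw [g0T, neg_mul_neg, Real.mul_self_sqrt (div_nonneg hq0.le (by linarith))]
  rw [h1, h2]
  field_simp [hq0.ne', (show (1:ℝ)-q ≠ 0 by linarith)]
  ring

lemma Ew_val {q : ℝ} (hq0 : 0 < q) (hq1 : q < 1) :
    ∫ b, (if b then (0:ℝ) else 1) ∂(bern q) = 1 - q := by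
  rw [integral_bern hq0.le hq1.le]
  simp

end Values

section InnerVals

variable {n m : ℕ} {t : ℝ}

lemma inner_exp_zero (ht : t ∈ Set.Ioo (0:ℝ) (1/2))
    (C : Finset (Fin n)) (j : Fin n) (hj : j ∉ C)
    {p : Fin m → ℝ} (hp : ∀ i, p i ∈ Set.Icc t (1-t)) :
    ∫ x, accusation m g1T g0T p (x j) (fun i => C.sup fun j' => x j' i)
      ∂(codeKernel n m p) = 0 := by
  rw [codeKernel_apply]
  simp only [accusation]
  rw [integral_finset_sum _ (fun i _ => Integrable.of_finite)]
  apply Finset.sum_eq_zero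
  intro i _
  have hpi0 : 0 < p i := lt_of_lt_of_le ht.1 (hp i).1
  have hpi1 : p i < 1 := by
    have h1 := (hp i).2; have h2 := ht.1; linarith
  have hEg : ∫ b, (if b then g1T (p i) else g0T (p i)) ∂(bern' (p i)) = 0 := by
    rw [bern'_eq hpi0.le hpi1.le]
    exact Eg_zero hpi0 hpi1
  rw [inner_int C j hj i (fun k => bern' (p k))
    (fun b => if b then g1T (p i) else g0T (p i)), hEg, zero_mul]

lemma inner_sq_val (ht : t ∈ Set.Ioo (0:ℝ) (1/2))
    (C : Finset (Fin n)) (j : Fin n) (hj : j ∉ C)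
    {p : Fin m → ℝ} (hp : ∀ i, p i ∈ Set.Icc t (1-t)) :
    ∫ x, (accusation m g1T g0T p (x j) (fun i => C.sup fun j' => x j' i))^2
      ∂(codeKernel n m p) = ∑ i, (1 - (1 - p i)^C.card) := by
  rw [codeKernel_apply]
  simp only [accusation]
  have hpi0 : ∀ i : Fin m, 0 < p i := fun i => lt_of_lt_of_le ht.1 (hp i).1
  have hpi1 : ∀ i : Fin m, p i < 1 := by
    intro i
    have h1 := (hp i).2; have h2 := ht.1; linarith
  have hsq : ∀ x : Fin n → Fin m → Bool,
      (∑ i, if (C.sup fun j' => x j' i) then (if x j i then g1T (p i) else g0T (p i)) else 0)^2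
      = ∑ i, ∑ i',
          (if (C.sup fun j' => x j' i) then (if x j i then g1T (p i) else g0T (p i)) else 0)
          * (if (C.sup fun j' => x j' i') then (if x j i' then g1T (p i') else g0T (p i')) else 0) := by
    intro x
    rw [sq, Finset.sum_mul_sum]
  calc ∫ x : Fin n → Fin m → Bool,
        (∑ i, if (C.sup fun j' => x j' i) then (if x j i then g1T (p i) else g0T (p i)) else 0)^2
        ∂(Measure.pi fun _ : Fin n => Measure.pi fun i => bern' (p i))
      = ∫ x : Fin n → Fin m → Bool, ∑ i, ∑ i',
          (if (C.sup fun j' => x j' i) then (if x j i then g1T (p i) else g0T (p i)) else 0)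
          * (if (C.sup fun j' => x j' i') then (if x j i' then g1T (p i') else g0T (p i')) else 0)
        ∂(Measure.pi fun _ : Fin n => Measure.pi fun i => bern' (p i)) := by
        congr 1; ext x; exact hsq x
    _ = ∑ i, ∫ x : Fin n → Fin m → Bool, ∑ i',
          (if (C.sup fun j' => x j' i) then (if x j i then g1T (p i) else g0T (p i)) else 0)
          * (if (C.sup fun j' => x j' i') then (if x j i' then g1T (p i') else g0T (p i')) else 0)
        ∂(Measure.pi fun _ : Fin n => Measure.pi fun i => bern' (p i)) :=
        integral_finset_sum _ (fun i _ => Integrable.of_finite)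
    _ = ∑ i, (1 - (1 - p i)^C.card) := by
        apply Finset.sum_congr rfl
        intro i _
        rw [integral_finset_sum _ (fun i' _ => Integrable.of_finite)]
        rw [Finset.sum_eq_single i ?_ ?_]
        · -- diagonal term
          have hpt : ∀ x : Fin n → Fin m → Bool,
              (if (C.sup fun j' => x j' i) then (if x j i then g1T (p i) else g0T (p i)) else 0)
              * (if (C.sup fun j' => x j' i) then (if x j i then g1T (p i) else g0T (p i)) else 0)
              = if (C.sup fun j' => x j' i) then
                  ((if x j i then g1T (p i) else g0T (p i))
                    * (if x j i then g1T (p i) else g0T (p i))) else 0 := by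
            intro x
            cases hs : (C.sup fun j' => x j' i) <;> simp [hs]
          calc ∫ x : Fin n → Fin m → Bool,
                (if (C.sup fun j' => x j' i) then (if x j i then g1T (p i) else g0T (p i)) else 0)
                * (if (C.sup fun j' => x j' i) then (if x j i then g1T (p i) else g0T (p i)) else 0)
                ∂(Measure.pi fun _ : Fin n => Measure.pi fun i => bern' (p i))
              = ∫ x : Fin n → Fin m → Bool,
                (if (C.sup fun j' => x j' i) then
                  ((if x j i then g1T (p i) else g0T (p i))
                    * (if x j i then g1T (p i) else g0T (p i))) else 0)
                ∂(Measure.pi fun _ : Fin n => Measure.pi fun i => bern' (p i)) := by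
                congr 1; ext x; exact hpt x
            _ = 1 - (1 - p i)^C.card := by
                rw [inner_int C j hj i (fun k => bern' (p k))
                  (fun b => (if b then g1T (p i) else g0T (p i))
                    * (if b then g1T (p i) else g0T (p i)))]
                rw [show (∫ b, ((if b then g1T (p i) else g0T (p i))
                    * (if b then g1T (p i) else g0T (p i))) ∂(bern' (p i))) = 1 by
                  rw [bern'_eq (hpi0 i).le (hpi1 i).le]; exact Eg_sq (hpi0 i) (hpi1 i)]
                rw [show (∫ b, (if b then (0:ℝ) else 1) ∂(bern' (p i))) = 1 - p i by
                  rw [bern'_eq (hpi0 i).le (hpi1 i).le]; exact Ew_val (hpi0 i) (hpi1 i)]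
                ring
        · intro i' _ hne
          have hEg : ∫ b, (if b then g1T (p i) else g0T (p i)) ∂(bern' (p i)) = 0 := by
            rw [bern'_eq (hpi0 i).le (hpi1 i).le]
            exact Eg_zero (hpi0 i) (hpi1 i)
          exact inner_int_mul C j hj (Ne.symm hne) (fun k => bern' (p k))
            (fun b => if b then g1T (p i) else g0T (p i))
            (fun b => if b then g1T (p i') else g0T (p i')) hEg
        · intro habs
          exact absurd (Finset.mem_univ i) habs

end InnerVals

section SBounds

lemma g1T_measurable : Measurable g1T :=
  Real.continuous_sqrt.measurable.comp ((measurable_const.sub measurable_id).div measurable_id)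

lemma g0T_measurable : Measurable g0T :=
  (Real.continuous_sqrt.measurable.comp
    (measurable_id.div (measurable_const.sub measurable_id))).neg

lemma g1T_abs_le {t r : ℝ} (ht : t ∈ Set.Ioo (0:ℝ) (1/2)) (hr : r ∈ Set.Icc t (1-t)) :
    |g1T r| ≤ Real.sqrt ((1-t)/t) := by
  rw [g1T, abs_of_nonneg (Real.sqrt_nonneg _)]
  apply Real.sqrt_le_sqrt
  have h2 := ht.2
  exact div_le_div₀ (by linarith [ht.1]) (by linarith [hr.1]) ht.1 hr.1

lemma g0T_abs_le {t r : ℝ} (ht : t ∈ Set.Ioo (0:ℝ) (1/2)) (hr : r ∈ Set.Icc t (1-t)) :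
    |g0T r| ≤ Real.sqrt ((1-t)/t) := by
  rw [g0T, abs_neg, abs_of_nonneg (Real.sqrt_nonneg _)]
  apply Real.sqrt_le_sqrt
  have h2 := ht.2
  exact div_le_div₀ (by linarith [ht.1]) (by linarith [hr.2]) ht.1 (by linarith [hr.2])

lemma Sfun_measurable (n m : ℕ) (C : Finset (Fin n)) (j : Fin n) :
    Measurable (fun q : (Fin m → ℝ) × (Fin n → Fin m → Bool) =>
      accusation m g1T g0T q.1 (q.2 j) (fun i => C.sup fun j' => q.2 j' i)) := by
  simp only [accusation]
  apply Finset.measurable_sum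
  intro i _
  have hy : Measurable fun q : (Fin m → ℝ) × (Fin n → Fin m → Bool) =>
      (C.sup fun j' => q.2 j' i) :=
    (Measurable.of_discrete
      (f := fun x : Fin n → Fin m → Bool => C.sup fun j' => x j' i)).comp measurable_snd
  have hx : Measurable fun q : (Fin m → ℝ) × (Fin n → Fin m → Bool) => q.2 j i :=
    (Measurable.of_discrete
      (f := fun x : Fin n → Fin m → Bool => x j i)).comp measurable_snd
  have hq1 : Measurable fun q : (Fin m → ℝ) × (Fin n → Fin m → Bool) => q.1 i :=
    (measurable_pi_apply i).comp measurable_fst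
  exact Measurable.ite (hy (measurableSet_singleton true))
    (Measurable.ite (hx (measurableSet_singleton true))
      (g1T_measurable.comp hq1) (g0T_measurable.comp hq1)) measurable_const

lemma Sfun_bound {n m : ℕ} {t : ℝ} (ht : t ∈ Set.Ioo (0:ℝ) (1/2))
    (C : Finset (Fin n)) (j : Fin n)
    {q : (Fin m → ℝ) × (Fin n → Fin m → Bool)} (hq : ∀ i, q.1 i ∈ Set.Icc t (1-t)) :
    |accusation m g1T g0T q.1 (q.2 j) (fun i => C.sup fun j' => q.2 j' i)|
      ≤ m * Real.sqrt ((1-t)/t) := by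
  simp only [accusation]
  have hM0 : (0:ℝ) ≤ Real.sqrt ((1-t)/t) := Real.sqrt_nonneg _
  calc |∑ i, if (C.sup fun j' => q.2 j' i) then
          (if q.2 j i then g1T (q.1 i) else g0T (q.1 i)) else 0|
      ≤ ∑ i, |if (C.sup fun j' => q.2 j' i) then
          (if q.2 j i then g1T (q.1 i) else g0T (q.1 i)) else 0| :=
        Finset.abs_sum_le_sum_abs _ _
    _ ≤ ∑ i : Fin m, Real.sqrt ((1-t)/t) := by
        apply Finset.sum_le_sum
        intro i _
        cases hs : (C.sup fun j' => q.2 j' i)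
        · simpa [hs] using hM0
        · simp only [hs, if_true]
          cases hb : q.2 j i
          · simp only [hb, Bool.false_eq_true, if_false]
            exact g0T_abs_le ht (hq i)
          · simp only [hb, if_true]
            exact g1T_abs_le ht (hq i)
    _ = m * Real.sqrt ((1-t)/t) := by
        rw [Finset.sum_const, Finset.card_univ, Fintype.card_fin, nsmul_eq_mul]

end SBounds

lemma integral_biasMeasure {f : ℝ → ℝ} (hf : Measurable f) (hf0 : ∀ q, 0 ≤ f q) (g : ℝ → ℝ) :
    ∫ q, g q ∂(biasMeasure f) = ∫ q, f q * g q := by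
  rw [biasMeasure,
    show (fun p => ENNReal.ofReal (f p)) = (fun p => ((Real.toNNReal (f p)) : ENNReal))
      from rfl,
    integral_withDensity_eq_integral_smul hf.real_toNNReal g]
  congr 1
  funext q
  rw [NNReal.smul_def, Real.coe_toNNReal _ (hf0 q), smul_eq_mul]

/-- in the code-generation model with Tardos' functions, if the coalition
`C` (of size `c ≥ 1`) uses the extremal strategy `y_i = 1 ⟺ Σ_{j∈C} X_{ji} ≥ 1`
(here `y i = C.sup (fun j => X j i)`), then for every user `j ∉ C`:
`E[S_j] = 0` and `Var S_j = m·(1 - (1/(π-4t'))·∫_t^{1-t} p^{-1/2}(1-p)^{c-1/2} dp)`. -/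
theorem innocent_moments_extremal_strategy
    (n m : ℕ) (hn : 1 ≤ n) (hm : 1 ≤ m)
    (t : ℝ) (ht : t ∈ Set.Ioo (0:ℝ) (1/2))
    (C : Finset (Fin n)) (hC : 1 ≤ C.card)
    (j : Fin n) (hj : j ∉ C) :
    (∫ q, accusation m g1T g0T q.1 (q.2 j) (fun i => C.sup fun j' => q.2 j' i)
        ∂(codeMeasure n m (fT t))) = 0
    ∧ variance
        (fun q : (Fin m → ℝ) × (Fin n → Fin m → Bool) =>
          accusation m g1T g0T q.1 (q.2 j) (fun i => C.sup fun j' => q.2 j' i))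
        (codeMeasure n m (fT t))
      = (m : ℝ) * (1 - (1 / (π - 4 * tprime t)) *
          ∫ p in Set.Icc t (1-t), p ^ (-(1/2) : ℝ) * (1-p) ^ ((C.card : ℝ) - 1/2)) := by
  haveI hbp := bias_prob ht
  set μp : Measure (Fin m → ℝ) := Measure.pi fun _ : Fin m => biasMeasure (fT t) with hμp
  have hrw : codeMeasure n m (fT t) = μp ⊗ₘ codeKernel n m := codeMeasure_eq n m ht
  set M : ℝ := Real.sqrt ((1-t)/t) with hM
  -- a.e. goodness over the product measure
  have hBpset : MeasurableSet {p : Fin m → ℝ | ∀ i, p i ∈ Set.Icc t (1-t)} := by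
    rw [Set.setOf_forall]
    exact MeasurableSet.iInter fun i => (measurable_pi_apply i) measurableSet_Icc
  have haeG : ∀ᵐ q ∂(μp ⊗ₘ codeKernel n m), ∀ i, q.1 i ∈ Set.Icc t (1-t) := by
    rw [ae_iff]
    have hmeasB : MeasurableSet {p : Fin m → ℝ | ¬ ∀ i, p i ∈ Set.Icc t (1-t)} := hBpset.compl
    have hkey : {q : (Fin m → ℝ) × (Fin n → Fin m → Bool) | ¬ ∀ i, q.1 i ∈ Set.Icc t (1-t)}
        = Prod.fst ⁻¹' {p : Fin m → ℝ | ¬ ∀ i, p i ∈ Set.Icc t (1-t)} := rfl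
    rw [hkey, ← Measure.fst_apply hmeasB, Measure.fst_compProd]
    have h0 := pi_bias_ae ht m
    rw [ae_iff] at h0
    exact h0
  have haeBound : ∀ᵐ q ∂(μp ⊗ₘ codeKernel n m),
      ‖accusation m g1T g0T q.1 (q.2 j) (fun i => C.sup fun j' => q.2 j' i)‖ ≤ m * M := by
    filter_upwards [haeG] with q hq
    rw [Real.norm_eq_abs]
    exact Sfun_bound ht C j hq
  have hSint : Integrable (fun q : (Fin m → ℝ) × (Fin n → Fin m → Bool) =>
      accusation m g1T g0T q.1 (q.2 j) (fun i => C.sup fun j' => q.2 j' i))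
      (μp ⊗ₘ codeKernel n m) :=
    Integrable.mono' (integrable_const (m * M))
      (Sfun_measurable n m C j).aestronglyMeasurable haeBound
  -- the expectation is zero
  have hE : (∫ q, accusation m g1T g0T q.1 (q.2 j) (fun i => C.sup fun j' => q.2 j' i)
      ∂(μp ⊗ₘ codeKernel n m)) = 0 := by
    calc (∫ q, accusation m g1T g0T q.1 (q.2 j) (fun i => C.sup fun j' => q.2 j' i)
        ∂(μp ⊗ₘ codeKernel n m))
        = ∫ a, (∫ b, accusation m g1T g0T a (b j) (fun i => C.sup fun j' => b j' i)
            ∂(codeKernel n m a)) ∂μp := Measure.integral_compProd hSint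
      _ = ∫ _a, (0:ℝ) ∂μp := by
          apply integral_congr_ae
          filter_upwards [pi_bias_ae ht m] with p hp
          exact inner_exp_zero ht C j hj hp
      _ = 0 := integral_zero _ _
  refine ⟨by rw [hrw]; exact hE, ?_⟩
  -- variance
  rw [hrw]
  haveI : IsProbabilityMeasure (μp ⊗ₘ codeKernel n m) := inferInstance
  have hmem : MemLp (fun q : (Fin m → ℝ) × (Fin n → Fin m → Bool) =>
      accusation m g1T g0T q.1 (q.2 j) (fun i => C.sup fun j' => q.2 j' i)) 2
      (μp ⊗ₘ codeKernel n m) :=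
    MemLp.of_bound (Sfun_measurable n m C j).aestronglyMeasurable (m * M) haeBound
  rw [variance_eq_sub hmem]
  simp only [Pi.pow_apply]
  rw [hE]
  have hSqint : Integrable (fun q : (Fin m → ℝ) × (Fin n → Fin m → Bool) =>
      (accusation m g1T g0T q.1 (q.2 j) (fun i => C.sup fun j' => q.2 j' i))^2)
      (μp ⊗ₘ codeKernel n m) := by
    apply Integrable.mono' (integrable_const ((m * M)^2))
      ((Sfun_measurable n m C j).pow_const 2).aestronglyMeasurable
    filter_upwards [haeBound] with q hq
    rw [Real.norm_eq_abs, abs_pow]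
    apply pow_le_pow_left₀ (abs_nonneg _)
    rwa [Real.norm_eq_abs] at hq
  have hint_i : ∀ i : Fin m, Integrable (fun a : Fin m → ℝ => 1 - (1 - a i)^C.card) μp := by
    intro i
    apply Integrable.mono' (integrable_const 1)
      (measurable_const.sub ((measurable_const.sub (measurable_pi_apply i)).pow_const
        C.card)).aestronglyMeasurable
    filter_upwards [pi_bias_ae ht m] with p hp
    rw [Real.norm_eq_abs]
    have h1 : 0 ≤ 1 - p i := by
      have := (hp i).2; have := ht.1; linarith
    have h2 : 1 - p i ≤ 1 := by
      have := (hp i).1; have := ht.1; linarith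
    have h3 : 0 ≤ (1 - p i)^C.card := pow_nonneg h1 _
    have h4 : (1 - p i)^C.card ≤ 1 := pow_le_one₀ h1 h2
    simp only [Pi.sub_apply]
    rw [abs_le]
    constructor <;> linarith
  have hmeaspow : Measurable (fun r : ℝ => (1-r)^C.card) :=
    (measurable_const.sub measurable_id).pow_const C.card
  have hmeas1 : Measurable (fun r : ℝ => 1 - (1-r)^C.card) :=
    measurable_const.sub hmeaspow
  have hbias_int : Integrable (fun r : ℝ => (1-r)^C.card) (biasMeasure (fT t)) := by
    apply Integrable.mono' (integrable_const 1) hmeaspow.aestronglyMeasurable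
    filter_upwards [bias_ae ht] with r hr
    rw [Real.norm_eq_abs]
    have h1 : 0 ≤ 1 - r := by
      have := hr.2; have := ht.1; linarith
    have h2 : 1 - r ≤ 1 := by
      have := hr.1; have := ht.1; linarith
    have h3 : 0 ≤ (1-r)^C.card := pow_nonneg h1 _
    have h4 : (1-r)^C.card ≤ 1 := pow_le_one₀ h1 h2
    rw [abs_le]
    constructor <;> linarith
  have hI2 : ∫ r, (1-r)^C.card ∂(biasMeasure (fT t))
      = (π - 4 * tprime t)⁻¹
        * ∫ p in Set.Icc t (1-t), p ^ (-(1/2) : ℝ) * (1-p) ^ ((C.card : ℝ) - 1/2) := by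
    rw [integral_biasMeasure (fT_measurable t) (fT_nonneg ht)]
    have hind : (fun r => fT t r * (1-r)^C.card)
        = Set.indicator (Set.Icc t (1-t))
            (fun r => (1/((π - 4 * tprime t) * Real.sqrt (r*(1-r)))) * (1-r)^C.card) := by
      funext r
      by_cases hmem : r ∈ Set.Icc t (1-t)
      · rw [Set.indicator_of_mem hmem, fT, if_pos hmem]
      · rw [Set.indicator_of_notMem hmem, fT, if_neg hmem, zero_mul]
    rw [hind, integral_indicator measurableSet_Icc]
    have hptw : ∀ r : ℝ, (1/((π - 4 * tprime t) * Real.sqrt (r*(1-r)))) * (1-r)^C.card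
        = (π - 4 * tprime t)⁻¹ * ((1-r)^C.card / Real.sqrt (r*(1-r))) := by
      intro r
      rw [one_div, mul_inv]
      ring
    simp_rw [hptw]
    rw [MeasureTheory.integral_const_mul]
    congr 1
    apply setIntegral_congr_fun measurableSet_Icc
    intro r hr
    beta_reduce
    have hr0 : 0 < r := lt_of_lt_of_le ht.1 hr.1
    have hr1 : 0 < 1 - r := by
      have := hr.2; have := ht.1; linarith
    rw [Real.rpow_neg hr0.le, show ((C.card:ℝ) - 1/2) = (C.card:ℝ) + (-(1/2)) by ring,
      Real.rpow_add hr1, Real.rpow_natCast, Real.rpow_neg hr1.le,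
      ← Real.sqrt_eq_rpow, ← Real.sqrt_eq_rpow, Real.sqrt_mul hr0.le]
    rw [div_eq_mul_inv, mul_inv]
    ring
  calc (∫ q, (accusation m g1T g0T q.1 (q.2 j) (fun i => C.sup fun j' => q.2 j' i))^2
        ∂(μp ⊗ₘ codeKernel n m)) - 0^2
      = ∫ a, (∫ b, (accusation m g1T g0T a (b j) (fun i => C.sup fun j' => b j' i))^2
          ∂(codeKernel n m a)) ∂μp := by
        rw [Measure.integral_compProd hSqint]
        ring
    _ = ∫ a, (∑ i : Fin m, (1 - (1 - a i)^C.card)) ∂μp := by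
        apply integral_congr_ae
        filter_upwards [pi_bias_ae ht m] with p hp
        exact inner_sq_val ht C j hj hp
    _ = ∑ i : Fin m, ∫ a, (1 - (1 - a i)^C.card) ∂μp :=
        integral_finset_sum _ (fun i _ => hint_i i)
    _ = ∑ i : Fin m, (1 - (π - 4 * tprime t)⁻¹
          * ∫ p in Set.Icc t (1-t), p ^ (-(1/2) : ℝ) * (1-p) ^ ((C.card : ℝ) - 1/2)) := by
        apply Finset.sum_congr rfl
        intro i _
        rw [hμp, integral_pi_eval_real (biasMeasure (fT t)) i hmeas1]
        rw [integral_sub (integrable_const 1) hbias_int, hI2]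
        simp
    _ = (m : ℝ) * (1 - (1 / (π - 4 * tprime t)) *
          ∫ p in Set.Icc t (1-t), p ^ (-(1/2) : ℝ) * (1-p) ^ ((C.card : ℝ) - 1/2)) := by
        rw [Finset.sum_const, Finset.card_univ, Fintype.card_fin, nsmul_eq_mul,
          one_div (π - 4 * tprime t)]

end
end

section
/- Let p ∈ (0,1), let g1: (0,1) → ℝ be positive, and set g0(p) = −p·g1(p)/(1−p). Let X be Bernoulli with P[X = 1] = p and set U = g1(p) if X = 1, U = g0(p) if X = 0. Then E[U] = 0, and for every α > 0 with α·g1(p) ≤ 1.7: E[e^{α·U}] ≤ 1 + α²·(p·g1(p)² + (1−p)·g0(p)²). -/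
open MeasureTheory Real

noncomputable section

/-- `e^u ≤ 1 + u + u²` for `u ≤ 1.7`. -/
lemma exp_le_quad {u : ℝ} (hu : u ≤ 1.7) : Real.exp u ≤ 1 + u + u ^ 2 := by
  rcases le_or_gt u 0 with h | h
  · have h1 : 1 - u ≤ Real.exp (-u) := by
      have := Real.add_one_le_exp (-u); linarith
    have h2 : Real.exp u * (1 - u) ≤ 1 := by
      have h3 : Real.exp u * (1 - u) ≤ Real.exp u * Real.exp (-u) := by
        have := Real.exp_pos u
        nlinarith
      rw [← Real.exp_add] at h3
      simpa using h3
    nlinarith [Real.exp_pos u]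
  · set y := u / 2 with hy
    have hy0 : 0 ≤ y := by positivity
    have hy1 : y ≤ 0.85 := by rw [hy]; linarith
    have hb := Real.exp_bound' hy0 (by linarith : y ≤ 1) (n := 5) (by norm_num)
    have hS : Real.exp y ≤ 1 + y + y^2/2 + y^3/6 + y^4/24 + y^5/100 := by
      convert hb using 1
      simp [Finset.sum_range_succ, Nat.factorial]
      ring
    have hexpy : 0 < Real.exp y := Real.exp_pos y
    have hu2 : u = 2 * y := by rw [hy]; ring
    have hexpu : Real.exp u = Real.exp y * Real.exp y := by
      rw [← Real.exp_add, hu2]; ring_nf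
    rw [hexpu, hu2]
    nlinarith [sq_nonneg y, sq_nonneg (y - 0.85), pow_nonneg hy0 3, pow_nonneg hy0 4,
      pow_nonneg hy0 5, mul_nonneg (pow_nonneg hy0 3) (sub_nonneg.2 hy1),
      mul_nonneg (pow_nonneg hy0 4) (sub_nonneg.2 hy1)]

lemma bern_integral (p : ℝ) (h0 : 0 ≤ p) (h1 : p ≤ 1) (f : Bool → ℝ) :
    ∫ b, f b ∂(bern p) = p * f true + (1 - p) * f false := by
  have fin1 : IsFiniteMeasure (ENNReal.ofReal p • Measure.dirac (true : Bool)) := by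
    constructor
    simp [Measure.smul_apply]
  have fin2 : IsFiniteMeasure (ENNReal.ofReal (1-p) • Measure.dirac (false : Bool)) := by
    constructor
    simp [Measure.smul_apply]
  rw [bern, integral_add_measure (.of_finite) (.of_finite),
    integral_smul_measure, integral_smul_measure, integral_dirac, integral_dirac,
    ENNReal.toReal_ofReal h0, ENNReal.toReal_ofReal (by linarith), smul_eq_mul, smul_eq_mul]

/-- single-column moment bound. For `p ∈ (0,1)`, `g1` positive on `(0,1)`,
`g0 p = -p·g1 p/(1-p)`, and `U = g1 p` (if `X = 1`) or `g0 p` (if `X = 0`) with `X`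
Bernoulli(`p`): `E[U] = 0`, and for every `α > 0` with `α·g1 p ≤ 1.7`,
`E[e^{α·U}] ≤ 1 + α²·(p·g1 p² + (1-p)·g0 p²)`. -/
theorem single_column_mgf_bound
    (p : ℝ) (hp : p ∈ Set.Ioo (0:ℝ) 1)
    (g1 : ℝ → ℝ) (hg1_pos : ∀ q ∈ Set.Ioo (0:ℝ) 1, 0 < g1 q)
    (g0 : ℝ → ℝ) (hg0 : ∀ q, g0 q = - q * g1 q / (1 - q))
    (U : Bool → ℝ) (hU : ∀ b, U b = if b then g1 p else g0 p) :
    (∫ b, U b ∂(bern p)) = 0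
    ∧ (∀ α : ℝ, 0 < α → α * g1 p ≤ 1.7 →
        (∫ b, Real.exp (α * U b) ∂(bern p))
          ≤ 1 + α ^ 2 * (p * g1 p ^ 2 + (1-p) * g0 p ^ 2)) := by
  obtain ⟨hp0, hp1⟩ := hp
  have hp1' : (0:ℝ) < 1 - p := by linarith
  have hg1p : 0 < g1 p := hg1_pos p ⟨hp0, hp1⟩
  have hmean : p * g1 p + (1 - p) * g0 p = 0 := by
    rw [hg0 p]
    field_simp
    ring
  constructor
  · rw [bern_integral p hp0.le hp1.le U, hU true, hU false]
    simpa using hmean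
  · intro α hα hα17
    have hg0neg : g0 p ≤ 0 := by
      rw [hg0 p]
      have : 0 ≤ p * g1 p := by positivity
      have h2 : -p * g1 p ≤ 0 := by nlinarith
      exact div_nonpos_of_nonpos_of_nonneg h2 hp1'.le
    rw [bern_integral p hp0.le hp1.le _, hU true, hU false]
    simp only [if_true, if_false, Bool.false_eq_true]
    have h1 : Real.exp (α * g1 p) ≤ 1 + α * g1 p + (α * g1 p) ^ 2 :=
      exp_le_quad hα17
    have h0 : Real.exp (α * g0 p) ≤ 1 + α * g0 p + (α * g0 p) ^ 2 :=
      exp_le_quad (by nlinarith)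
    have key : p * Real.exp (α * g1 p) + (1 - p) * Real.exp (α * g0 p)
        ≤ p * (1 + α * g1 p + (α * g1 p) ^ 2) + (1 - p) * (1 + α * g0 p + (α * g0 p) ^ 2) := by
      have := mul_le_mul_of_nonneg_left h1 hp0.le
      have := mul_le_mul_of_nonneg_left h0 hp1'.le
      linarith
    calc p * Real.exp (α * g1 p) + (1 - p) * Real.exp (α * g0 p)
        ≤ p * (1 + α * g1 p + (α * g1 p) ^ 2) + (1 - p) * (1 + α * g0 p + (α * g0 p) ^ 2) := key
      _ = 1 + α * (p * g1 p + (1 - p) * g0 p) + α ^ 2 * (p * g1 p ^ 2 + (1 - p) * g0 p ^ 2) := by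
          ring
      _ = 1 + α ^ 2 * (p * g1 p ^ 2 + (1 - p) * g0 p ^ 2) := by rw [hmean]; ring

end
end

section
/- Fix τ ∈ (0,1/2) and ε1, ε2 ∈ (0,1/2) with ε1 ≤ (1/2)·Erfc(1/2). Then there exists an integer c0* (depending on ε1, ε2, τ) such that for every integer c0 ≥ c0*, setting m = ⌈(2π²/(1−2τ)²)·c0²·ln(1/(ε1·√(2π)))⌉, there exists a threshold Z with the following property: for every Gaussian random variable W with mean 0 and variance v1 ∈ (0, m], and every Gaussian random variable V with mean μ ≥ (1−2τ)·m/π and variance v2 ∈ (0, c0·m], one has P[W > Z] ≤ ε1 and P[V ≤ c0·Z] ≤ ε2. -/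
open MeasureTheory ProbabilityTheory Real

noncomputable section

open Filter Set Topology
open scoped NNReal ENNReal

/-- The complementary error function `Erfc x = (2/√π)·∫_x^∞ e^{-s²} ds`. -/
def Erfc (x : ℝ) : ℝ := (2 / Real.sqrt π) * ∫ s in Set.Ioi x, Real.exp (-s ^ 2)

lemma sq_le_helper {x y : ℝ} (hx : 0 ≤ x) (hy : 0 ≤ y) (h : x^2 ≤ y^2) : x ≤ y := by
  nlinarith [sq_nonneg (x - y), sq_nonneg (x + y)]

lemma tail_int (μ : ℝ) {v : ℝ} (hv : 0 < v) (a : ℝ) :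
    ∫ x in Set.Ioi a, ((x - μ) * Real.exp (-(x - μ)^2 / (2*v)))
      = v * Real.exp (-(a - μ)^2 / (2*v)) := by
  have hb : 0 < (2*v)⁻¹ := by positivity
  have hint : IntegrableOn (fun x => (x - μ) * Real.exp (-(x - μ)^2 / (2*v))) (Set.Ioi a) := by
    have h0 : Integrable (fun x : ℝ => x * Real.exp (-(2*v)⁻¹ * x^2)) := integrable_mul_exp_neg_mul_sq hb
    have h1 := h0.comp_sub_right μ
    refine (h1.congr (ae_of_all _ fun x => ?_)).integrableOn
    simp only
    rw [neg_div, div_eq_inv_mul, neg_mul]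
  have hderiv : ∀ x ∈ Set.Ici a, HasDerivAt (fun x => -v * Real.exp (-(x - μ)^2 / (2*v)))
      ((x - μ) * Real.exp (-(x - μ)^2 / (2*v))) x := by
    intro x _
    have h1 : HasDerivAt (fun x : ℝ => -(x - μ)^2 / (2*v)) (-(2*(x - μ))/(2*v)) x := by
      have := (((hasDerivAt_id x).sub_const μ).pow 2).neg.div_const (2*v)
      simpa using this
    have h2 := (h1.exp).const_mul (-v)
    refine h2.congr_deriv ?_
    field_simp
  have htend : Tendsto (fun x => -v * Real.exp (-(x - μ)^2 / (2*v))) atTop (𝓝 0) := by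
    have h1 : Tendsto (fun x : ℝ => (x - μ)^2 / (2*v)) atTop atTop := by
      apply Tendsto.atTop_div_const (by positivity)
      exact (tendsto_pow_atTop (two_ne_zero)).comp (tendsto_atTop_add_const_right atTop (-μ) tendsto_id)
    have h2 : Tendsto (fun x : ℝ => Real.exp (-(x - μ)^2 / (2*v))) atTop (𝓝 0) := by
      have := Real.tendsto_exp_neg_atTop_nhds_zero.comp h1
      refine this.congr fun x => ?_
      simp [Function.comp, neg_div]
    simpa using (h2.const_mul (-v))
  have := integral_Ioi_of_hasDerivAt_of_tendsto' hderiv hint htend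
  rw [this]
  ring

lemma gauss_tail (μ : ℝ) {v : ℝ≥0} (hv : 0 < v) {r z : ℝ} (hr : 0 < r) (hz : μ + r ≤ z) :
    gaussianReal μ v (Set.Ici z)
      ≤ ENNReal.ofReal (Real.sqrt v / (r * Real.sqrt (2*π)) * Real.exp (-r^2 / (2*v))) := by
  have hv' : (0:ℝ) < (v:ℝ) := hv
  have h1 : gaussianReal μ v (Set.Ici z) ≤ gaussianReal μ v (Set.Ici (μ + r)) :=
    measure_mono (Set.Ici_subset_Ici.2 hz)
  refine h1.trans ?_
  rw [gaussianReal_apply_eq_integral μ hv.ne' (Set.Ici (μ + r))]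
  apply ENNReal.ofReal_le_ofReal
  have hintR : IntegrableOn (fun x => (√(2 * π * v))⁻¹ / r * ((x - μ) * Real.exp (-(x - μ)^2 / (2*(v:ℝ))))) (Set.Ici (μ + r)) := by
    have hb : 0 < (2*(v:ℝ))⁻¹ := by positivity
    have h0 := (integrable_mul_exp_neg_mul_sq hb).comp_sub_right μ
    have h0' : Integrable (fun x : ℝ => (x - μ) * Real.exp (-(x - μ)^2 / (2*(v:ℝ)))) := by
      refine h0.congr (ae_of_all _ fun x => ?_)
      simp only
      rw [neg_div, div_eq_inv_mul, neg_mul]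
    exact ((h0'.const_mul _).integrableOn)
  have step1 : ∫ x in Set.Ici (μ + r), gaussianPDFReal μ v x
      ≤ ∫ x in Set.Ici (μ + r), (√(2 * π * v))⁻¹ / r * ((x - μ) * Real.exp (-(x - μ)^2 / (2*(v:ℝ)))) := by
    refine setIntegral_mono_on ((integrable_gaussianPDFReal μ v).integrableOn) hintR measurableSet_Ici ?_
    intro x hx
    have hx' : r ≤ x - μ := by simp only [Set.mem_Ici] at hx; linarith
    rw [gaussianPDFReal]
    have h4 : 0 < rexp (-(x - μ)^2 / (2*(v:ℝ))) := Real.exp_pos _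
    calc (√(2 * π * (v:ℝ)))⁻¹ * rexp (-(x - μ)^2 / (2*(v:ℝ)))
        = (√(2 * π * (v:ℝ)))⁻¹ / r * (r * rexp (-(x - μ)^2 / (2*(v:ℝ)))) := by
          field_simp
      _ ≤ (√(2 * π * (v:ℝ)))⁻¹ / r * ((x - μ) * rexp (-(x - μ)^2 / (2*(v:ℝ)))) := by
          apply mul_le_mul_of_nonneg_left (mul_le_mul_of_nonneg_right hx' h4.le) (by positivity)
  refine step1.trans ?_
  rw [integral_const_mul, MeasureTheory.integral_Ici_eq_integral_Ioi, tail_int μ hv' (μ + r)]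
  have : μ + r - μ = r := by ring
  rw [this]
  have hsq : √(2 * π * (v:ℝ)) = √(2*π) * √(v:ℝ) := by
    rw [← Real.sqrt_mul (by positivity)]
  rw [hsq]
  have h2 : (√(2*π) * √(v:ℝ))⁻¹ / r * ((v:ℝ) * Real.exp (-r^2/(2*(v:ℝ))))
      = (√(v:ℝ))⁻¹ * (v:ℝ) / (r * √(2*π)) * Real.exp (-r^2/(2*(v:ℝ))) := by
    have hs : √(v:ℝ) * √(v:ℝ) = (v:ℝ) := Real.mul_self_sqrt hv'.le
    field_simp
  rw [h2]
  have h3 : (√(v:ℝ))⁻¹ * (v:ℝ) = √(v:ℝ) := by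
    rw [inv_mul_eq_div, Real.div_sqrt]
  rw [h3]

lemma exp_neg_sq_integrable : Integrable (fun s : ℝ => Real.exp (-s ^ 2)) := by
  have := integrable_exp_neg_mul_sq (b := 1) one_pos
  simpa using this

lemma key_numeric : (√π/2 - 11/24) * √2 < Real.exp (-(1/2 : ℝ)) := by
  have h1 : √π < 1.7724541 := by
    have : π < 1.7724541^2 := by nlinarith [pi_lt_d6]
    calc √π < √(1.7724541^2) := Real.sqrt_lt_sqrt pi_pos.le this
      _ = 1.7724541 := Real.sqrt_sq (by norm_num)
  have h2 : √2 < 1.4142136 := by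
    have : (2:ℝ) < 1.4142136^2 := by norm_num
    calc √2 < √(1.4142136^2) := Real.sqrt_lt_sqrt (by norm_num) this
      _ = 1.4142136 := Real.sqrt_sq (by norm_num)
  have h3 : (1.4142135:ℝ) < √2 := by
    have : ((1.4142135:ℝ))^2 < 2 := by norm_num
    calc (1.4142135:ℝ) = √(1.4142135^2) := (Real.sqrt_sq (by norm_num)).symm
      _ < √2 := Real.sqrt_lt_sqrt (by positivity) this
  have h4 : (0.6065:ℝ) < Real.exp (-(1/2:ℝ)) := by
    have he : Real.exp 1 < 2.7182818286 := Real.exp_one_lt_d9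
    have h5 : Real.exp (-(1/2:ℝ))^2 = Real.exp (-1) := by
      rw [sq, ← Real.exp_add]; norm_num
    have h6 : ((0.6065:ℝ))^2 < Real.exp (-(1:ℝ)) := by
      rw [Real.exp_neg]
      have hi : (Real.exp 1) * (Real.exp 1)⁻¹ = 1 := mul_inv_cancel₀ (Real.exp_pos 1).ne'
      have hx : 0 < (Real.exp 1)⁻¹ := inv_pos.2 (Real.exp_pos 1)
      nlinarith [hi, he, hx]
    have h7 : ((0.6065:ℝ))^2 < Real.exp (-(1/2:ℝ))^2 := by rw [h5]; exact h6
    exact lt_of_pow_lt_pow_left₀ 2 (Real.exp_pos _).le h7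
  have hp := mul_lt_mul'' h1 h2 (Real.sqrt_nonneg _) (Real.sqrt_nonneg _)
  nlinarith [hp, h3, h4, Real.sqrt_nonneg 2]

lemma erfc_half_lt : Erfc (1/2) * √(2*π) / 2 < Real.exp (-(1/2:ℝ)) := by
  have hIoi0 : ∫ s in Set.Ioi (0:ℝ), Real.exp (-s ^ 2) = √π / 2 := by
    have := integral_gaussian_Ioi 1
    simpa using this
  have hsplit : (∫ s in Set.Ioc (0:ℝ) (1/2), Real.exp (-s ^ 2))
      + ∫ s in Set.Ioi (1/2:ℝ), Real.exp (-s ^ 2) = √π / 2 := by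
    rw [← hIoi0, ← setIntegral_union (Set.Ioc_disjoint_Ioi le_rfl) measurableSet_Ioi
      exp_neg_sq_integrable.integrableOn exp_neg_sq_integrable.integrableOn,
      Set.Ioc_union_Ioi_eq_Ioi (by norm_num : (0:ℝ) ≤ 1/2)]
  have hlow : (11/24 : ℝ) ≤ ∫ s in Set.Ioc (0:ℝ) (1/2), Real.exp (-s ^ 2) := by
    have hint1 : IntervalIntegrable (fun s : ℝ => 1 - s^2) volume 0 (1/2) :=
      (continuous_const.sub (continuous_pow 2)).intervalIntegrable _ _
    have hint2 : IntervalIntegrable (fun s : ℝ => Real.exp (-s ^ 2)) volume 0 (1/2) :=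
      (Real.continuous_exp.comp (continuous_pow 2).neg).intervalIntegrable _ _
    have hmono := intervalIntegral.integral_mono_on (by norm_num : (0:ℝ) ≤ 1/2) hint1 hint2
      (fun x _ => by nlinarith [Real.add_one_le_exp (-x^2)])
    have hval : ∫ s in (0:ℝ)..(1/2), (1 - s^2) = 11/24 := by
      rw [intervalIntegral.integral_sub intervalIntegrable_const
        ((continuous_pow 2).intervalIntegrable _ _), integral_pow]
      simp
      norm_num
    rw [hval, intervalIntegral.integral_of_le (by norm_num : (0:ℝ) ≤ 1/2)] at hmono
    exact hmono
  have hπ : (0:ℝ) < √π := Real.sqrt_pos.2 pi_pos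
  have h2π : √(2*π) = √2 * √π := Real.sqrt_mul (by norm_num) π
  rw [Erfc]
  have hI : ∫ s in Set.Ioi (1/2:ℝ), Real.exp (-s ^ 2) ≤ √π / 2 - 11/24 := by linarith
  have key := key_numeric
  calc (2 / √π) * (∫ s in Set.Ioi (1/2:ℝ), Real.exp (-s ^ 2)) * √(2*π) / 2
      = (∫ s in Set.Ioi (1/2:ℝ), Real.exp (-s ^ 2)) * √2 := by
        rw [h2π]; field_simp
    _ ≤ (√π / 2 - 11/24) * √2 := by
        apply mul_le_mul_of_nonneg_right hI (Real.sqrt_nonneg 2)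
    _ < Real.exp (-(1/2:ℝ)) := key

set_option maxHeartbeats 2000000 in
/-- in the Gaussian approximation, for fixed `τ ∈ (0,1/2)` and
`ε1, ε2 ∈ (0,1/2)` with `ε1 ≤ (1/2)·Erfc (1/2)`, there is a `c0*` such that for all
`c0 ≥ c0*`, with code length `m = ⌈(2π²/(1-2τ)²)·c0²·ln (1/(ε1·√(2π)))⌉` there is a
threshold `Z` such that every Gaussian `W` with mean `0` and variance `v1 ∈ (0,m]`
(innocent accusation sum) and every Gaussian `V` with mean `μ ≥ (1-2τ)m/π` and variance
`v2 ∈ (0, c0·m]` (coalition accusation sum) satisfy `P[W > Z] ≤ ε1` and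
`P[V ≤ c0·Z] ≤ ε2`. -/
theorem gaussian_asymptotic_code_length
    (τ ε1 ε2 : ℝ) (hτ : τ ∈ Set.Ioo (0:ℝ) (1/2))
    (hε1 : ε1 ∈ Set.Ioo (0:ℝ) (1/2)) (hε2 : ε2 ∈ Set.Ioo (0:ℝ) (1/2))
    (hε1' : ε1 ≤ (1/2) * Erfc (1/2)) :
    ∃ c0star : ℕ, ∀ c0 : ℕ, c0star ≤ c0 →
      ∀ m : ℝ,
        m = (⌈(2 * π ^ 2 / (1 - 2*τ) ^ 2) * (c0 : ℝ) ^ 2 *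
              Real.log (1 / (ε1 * Real.sqrt (2*π)))⌉ : ℝ) →
      ∃ Z : ℝ,
        ∀ (Ω : Type) [MeasurableSpace Ω] (P : Measure Ω), IsProbabilityMeasure P →
        ∀ (W V : Ω → ℝ) (v1 v2 : NNReal) (μ : ℝ),
          0 < v1 → (v1 : ℝ) ≤ m → 0 < v2 → (v2 : ℝ) ≤ (c0 : ℝ) * m →
          (1 - 2*τ) * m / π ≤ μ →
          Measure.map W P = gaussianReal 0 v1 →
          Measure.map V P = gaussianReal μ v2 →
          P {ω | Z < W ω} ≤ ENNReal.ofReal ε1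
          ∧ P {ω | V ω ≤ (c0 : ℝ) * Z} ≤ ENNReal.ofReal ε2 := by
  obtain ⟨hτ0, hτ1⟩ := hτ
  obtain ⟨hε10, hε11⟩ := hε1
  obtain ⟨hε20, hε21⟩ := hε2
  set a : ℝ := 1 - 2*τ with ha_def
  have ha0 : 0 < a := by rw [ha_def]; linarith
  set L : ℝ := Real.log (1 / (ε1 * Real.sqrt (2*π))) with hL_def
  have hsqrt2π_pos : (0:ℝ) < Real.sqrt (2*π) := Real.sqrt_pos.2 (by positivity)
  have hx_pos : 0 < ε1 * √(2*π) := by positivity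
  have hxe : ε1 * √(2*π) < Real.exp (-(1/2:ℝ)) := by
    calc ε1 * √(2*π) ≤ (1/2) * Erfc (1/2) * √(2*π) :=
          mul_le_mul_of_nonneg_right hε1' (Real.sqrt_nonneg _)
      _ = Erfc (1/2) * √(2*π) / 2 := by ring
      _ < Real.exp (-(1/2:ℝ)) := erfc_half_lt
  have hL : 1/2 < L := by
    have h3 : Real.log (ε1 * √(2*π)) < -(1/2) := by
      have := Real.log_lt_log hx_pos hxe
      rwa [Real.log_exp] at this
    have h4 : L = - Real.log (ε1 * √(2*π)) := by rw [hL_def, one_div, Real.log_inv]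
    linarith
  have hLpos : 0 < L := by linarith
  set K : ℝ := Real.sqrt (2*L) with hK_def
  have hK : 1 < K := by
    rw [hK_def, show (1:ℝ) = √1 from Real.sqrt_one.symm]
    exact Real.sqrt_lt_sqrt (by norm_num) (by linarith)
  have hKpos : 0 < K := lt_trans one_pos hK
  set s : ℝ := max 1 (Real.sqrt (2 * Real.log (1/ε2))) with hs_def
  have hs1 : 1 ≤ s := le_max_left _ _
  have hspos : 0 < s := lt_of_lt_of_le one_pos hs1
  have hlogε2 : 0 ≤ 2 * Real.log (1/ε2) := by
    have h5 : 1 < 1/ε2 := by rw [lt_div_iff₀ hε20]; linarith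
    have := Real.log_pos h5
    linarith
  have hs2 : 2 * Real.log (1/ε2) ≤ s^2 := by
    have h5 : Real.sqrt (2 * Real.log (1/ε2)) ≤ s := le_max_right _ _
    calc 2 * Real.log (1/ε2) = (√(2 * Real.log (1/ε2)))^2 := (Real.sq_sqrt hlogε2).symm
      _ ≤ s^2 := pow_le_pow_left₀ (Real.sqrt_nonneg _) h5 2
  set δ : ℝ := min ((1 - 1/K)/(1 + 2*L)) (1/2) with hδ_def
  have hKinv : 1/K < 1 := by rw [div_lt_one hKpos]; exact hK
  have hδpos : 0 < δ := by
    apply lt_min _ (by norm_num)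
    apply div_pos (by linarith) (by linarith)
  have hδhalf : δ ≤ 1/2 := min_le_right _ _
  have h1δpos : (0:ℝ) < 1 - δ := by linarith only [hδhalf]
  have hδkey : δ * (1 + 2*L) ≤ 1 - 1/K := by
    have h6 : δ ≤ (1 - 1/K)/(1 + 2*L) := min_le_left _ _
    exact (le_div_iff₀ (by linarith)).1 h6
  refine ⟨max 1 ⌈s^2/(2*L*δ^2)⌉₊, fun c0 hc0 m hm => ?_⟩
  have hc0_1 : 1 ≤ c0 := le_trans (le_max_left _ _) hc0
  have hc0pos : (0:ℝ) < (c0:ℝ) := by exact_mod_cast hc0_1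
  have hc0ne : (c0:ℝ) ≠ 0 := ne_of_gt hc0pos
  have hc0ge : s^2/(2*L*δ^2) ≤ (c0:ℝ) := by
    have h6 : ⌈s^2/(2*L*δ^2)⌉₊ ≤ c0 := le_trans (le_max_right _ _) hc0
    calc s^2/(2*L*δ^2) ≤ (⌈s^2/(2*L*δ^2)⌉₊ : ℝ) := Nat.le_ceil _
      _ ≤ (c0:ℝ) := by exact_mod_cast h6
  have hmge : 2*π^2/a^2 * (c0:ℝ)^2 * L ≤ m := by
    rw [hm]; exact_mod_cast Int.le_ceil _
  have hmpos : 0 < m :=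
    lt_of_lt_of_le (mul_pos (mul_pos (div_pos (by positivity) (pow_pos ha0 2))
      (pow_pos hc0pos 2)) hLpos) hmge
  have hsqm : (0:ℝ) < Real.sqrt m := Real.sqrt_pos.2 hmpos
  set Q : ℝ := K * Real.sqrt m with hQ_def
  have hQpos : 0 < Q := mul_pos hKpos hsqm
  have hQ2 : Q^2 = 2*L*m := by
    rw [hQ_def, mul_pow, hK_def, Real.sq_sqrt (by linarith : (0:ℝ) ≤ 2*L),
      Real.sq_sqrt hmpos.le]
  set t : ℝ := s * Real.sqrt ((c0:ℝ)*m) with ht_def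
  have hc0m : (0:ℝ) < (c0:ℝ)*m := mul_pos hc0pos hmpos
  have hsqc0m : (0:ℝ) < Real.sqrt ((c0:ℝ)*m) := Real.sqrt_pos.2 hc0m
  have htpos : 0 < t := mul_pos hspos hsqc0m
  have ht2 : t^2 = s^2 * ((c0:ℝ)*m) := by
    rw [ht_def, mul_pow, Real.sq_sqrt hc0m.le]
  have h2π2 : 2*π^2*(c0:ℝ)^2*L ≤ a^2 * m := by
    have hid : a^2 * (2*π^2/a^2*(c0:ℝ)^2*L) = 2*π^2*(c0:ℝ)^2*L := by
      field_simp
    have h10 := mul_le_mul_of_nonneg_left hmge (sq_nonneg a)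
    rw [hid] at h10
    exact h10
  have hamQ : (c0:ℝ)*Q ≤ a*m/π := by
    apply sq_le_helper (by positivity) (by positivity)
    have hfrm : (a*m/π)^2 = a^2*m^2/π^2 := by rw [div_pow, mul_pow]
    rw [hfrm, mul_pow, hQ2, le_div_iff₀ (by positivity : (0:ℝ) < π^2)]
    linarith only [mul_le_mul_of_nonneg_right h2π2 hmpos.le]
  have hδ't : t ≤ δ * ((c0:ℝ)*Q) := by
    apply sq_le_helper htpos.le (by positivity)
    rw [ht2, mul_pow, mul_pow, hQ2]
    have h7 : s^2 ≤ 2*L*δ^2*(c0:ℝ) := by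
      rw [div_le_iff₀ (by positivity)] at hc0ge
      linarith only [hc0ge]
    linarith only [mul_le_mul_of_nonneg_right h7 hc0m.le]
  set Z : ℝ := (a*m/π - t)/(c0:ℝ) with hZ_def
  have hc0Z : (c0:ℝ)*Z = a*m/π - t := by rw [hZ_def]; field_simp
  have hZge : Q*(1-δ) ≤ Z := by
    rw [hZ_def, le_div_iff₀ hc0pos]
    have hexp : Q*(1-δ)*(c0:ℝ) = (c0:ℝ)*Q - δ*((c0:ℝ)*Q) := by ring
    linarith only [hamQ, hδ't, hexp]
  have hQδpos : 0 < Q*(1-δ) := mul_pos hQpos h1δpos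
  have hZpos : 0 < Z := lt_of_lt_of_le hQδpos hZge
  have h2π1 : (1:ℝ) ≤ √(2*π) := by
    rw [show (1:ℝ) = √1 from Real.sqrt_one.symm]
    exact Real.sqrt_le_sqrt (by linarith only [pi_gt_three])
  have hfinal : Real.exp (2*δ*L) ≤ K*(1-δ) := by
    have hx1 : 1 - 2*δ*L ≤ Real.exp (-(2*δ*L)) := by
      have := Real.add_one_le_exp (-(2*δ*L)); linarith only [this]
    have hx2 : Real.exp (2*δ*L) * Real.exp (-(2*δ*L)) = 1 := by
      rw [← Real.exp_add]; simp
    have hx3 : Real.exp (2*δ*L) * (1 - 2*δ*L) ≤ 1 := by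
      linarith only [mul_le_mul_of_nonneg_left hx1 (Real.exp_pos (2*δ*L)).le, hx2]
    have hKinvpos : 0 < 1/K := by positivity
    have hx4 : 2*δ*L < 1 := by linarith only [hδkey, hδpos, hKinvpos]
    have hx5 : 1 ≤ K*(1-δ)*(1-2*δ*L) := by
      have hKd : K * (δ*(1+2*L)) ≤ K * (1 - 1/K) :=
        mul_le_mul_of_nonneg_left hδkey hKpos.le
      have hKK : K * (1 - 1/K) = K - 1 := by field_simp
      linarith only [hKd, hKK, mul_nonneg (mul_nonneg hKpos.le (sq_nonneg δ)) hLpos.le]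
    nlinarith only [hx3, hx5, hx4]
  refine ⟨Z, ?_⟩
  intro Ω _ P hP W V v1 v2 μ hv10 hv1m hv20 hv2m hμ hW hV
  constructor
  · -- innocent user: false positive probability
    have hWae : AEMeasurable W P := by
      refine aemeasurable_of_map_neZero ?_
      rw [hW]; infer_instance
    have hset : {ω | Z < W ω} = W ⁻¹' (Set.Ioi Z) := rfl
    have hv1' : (0:ℝ) < (v1:ℝ) := hv10
    rw [hset, ← Measure.map_apply_of_aemeasurable hWae measurableSet_Ioi, hW]
    have hreal : √(v1:ℝ) / (Z * √(2*π)) * Real.exp (-Z^2 / (2*(v1:ℝ))) ≤ ε1 := by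
      have e1 : Real.exp (-Z^2 / (2*(v1:ℝ))) ≤ Real.exp (-Z^2 / (2*m)) := by
        apply Real.exp_le_exp.2
        rw [neg_div, neg_div, neg_le_neg_iff]
        gcongr
      have e2 : √(v1:ℝ) ≤ √m := Real.sqrt_le_sqrt hv1m
      have e3 : (Q*(1-δ))^2 ≤ Z^2 := pow_le_pow_left₀ hQδpos.le hZge 2
      have e4 : Real.exp (-Z^2/(2*m)) ≤ Real.exp (-(L*(1-δ)^2)) := by
        apply Real.exp_le_exp.2
        rw [neg_div, neg_le_neg_iff, le_div_iff₀ (by positivity : (0:ℝ) < 2*m)]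
        have e3' : (Q*(1-δ))^2 = 2*L*m*(1-δ)^2 := by rw [mul_pow, hQ2]
        linarith only [e3, e3']
      have eL : Real.exp (-L) = ε1*√(2*π) := by
        rw [hL_def, one_div, Real.log_inv, neg_neg, Real.exp_log hx_pos]
      have e5 : Real.exp (-(L*(1-δ)^2)) ≤ ε1*√(2*π) * Real.exp (2*δ*L) := by
        have hsplit : -(L*(1-δ)^2) = -L + (2*δ*L - δ^2*L) := by ring
        rw [hsplit, Real.exp_add, eL]
        apply mul_le_mul_of_nonneg_left _ (by positivity)
        apply Real.exp_le_exp.2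
        linarith only [mul_nonneg (sq_nonneg δ) hLpos.le]
      have e6 : √m / (Z * √(2*π)) ≤ 1 / (K*(1-δ)*√(2*π)) := by
        have h8 : √m / (Z * √(2*π)) ≤ √m / (Q*(1-δ) * √(2*π)) := by
          gcongr
        refine h8.trans (le_of_eq ?_)
        have hKne : K ≠ 0 := hKpos.ne'
        have h1δne : (1:ℝ) - δ ≠ 0 := h1δpos.ne'
        have h2πne : √(2*π) ≠ 0 := hsqrt2π_pos.ne'
        have hmne : √m ≠ 0 := hsqm.ne'
        rw [hQ_def]
        field_simp
      calc √(v1:ℝ) / (Z * √(2*π)) * Real.exp (-Z^2 / (2*(v1:ℝ)))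
          ≤ √m / (Z * √(2*π)) * (ε1*√(2*π) * Real.exp (2*δ*L)) := by
            apply mul_le_mul (by gcongr)
              (e1.trans (e4.trans e5)) (Real.exp_pos _).le (by positivity)
        _ ≤ 1 / (K*(1-δ)*√(2*π)) * (ε1*√(2*π) * Real.exp (2*δ*L)) :=
            mul_le_mul_of_nonneg_right e6 (by positivity)
        _ ≤ ε1 := by
            rw [div_mul_eq_mul_div, one_mul,
              div_le_iff₀ (mul_pos (mul_pos hKpos h1δpos) hsqrt2π_pos)]
            have h11 := mul_le_mul_of_nonneg_left hfinal
              (by positivity : (0:ℝ) ≤ ε1*√(2*π))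
            linarith only [h11]
    calc gaussianReal 0 v1 (Set.Ioi Z)
        ≤ gaussianReal 0 v1 (Set.Ici Z) := measure_mono Set.Ioi_subset_Ici_self
      _ ≤ ENNReal.ofReal (√(v1:ℝ) / (Z * √(2*π)) * Real.exp (-Z^2 / (2*(v1:ℝ)))) :=
          gauss_tail 0 hv10 hZpos (by linarith)
      _ ≤ ENNReal.ofReal ε1 := ENNReal.ofReal_le_ofReal hreal
  · -- coalition: false negative probability
    have hVae0 : AEMeasurable V P := by
      refine aemeasurable_of_map_neZero ?_
      rw [hV]; infer_instance
    have hV2 : Measure.map (fun ω => -1 * V ω) P = gaussianReal (-μ) v2 := by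
      have hg : AEMeasurable (fun x : ℝ => -1 * x) (Measure.map V P) :=
        (measurable_id'.const_mul (-1)).aemeasurable
      have hmm := AEMeasurable.map_map_of_aemeasurable hg hVae0
      have hcomp : ((fun x : ℝ => -1 * x) ∘ V) = fun ω => -1 * V ω := rfl
      rw [hcomp] at hmm
      rw [← hmm, hV]
      have hone : (⟨(-1:ℝ)^2, sq_nonneg _⟩ : ℝ≥0) = 1 := by ext; norm_num
      have := gaussianReal_map_const_mul (μ := μ) (v := v2) (-1)
      rw [show NNReal.mk ((-1:ℝ)^2) (sq_nonneg _) = 1 by ext; norm_num, one_mul] at this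
      simpa [neg_one_mul] using this
    have hVae : AEMeasurable (fun ω => -1 * V ω) P := by
      refine aemeasurable_of_map_neZero ?_
      rw [hV2]; infer_instance
    have hsetV : {ω | V ω ≤ (c0:ℝ)*Z} = (fun ω => -1 * V ω) ⁻¹' (Set.Ici (-((c0:ℝ)*Z))) := by
      ext ω
      simp only [Set.mem_setOf_eq, Set.mem_preimage, Set.mem_Ici]
      constructor <;> intro h <;> linarith
    have hv2' : (0:ℝ) < (v2:ℝ) := hv20
    rw [hsetV, ← Measure.map_apply_of_aemeasurable hVae measurableSet_Ici, hV2]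
    have hμt : -μ + t ≤ -((c0:ℝ)*Z) := by
      rw [hc0Z]
      linarith only [hμ]
    have hreal : √(v2:ℝ) / (t * √(2*π)) * Real.exp (-t^2 / (2*(v2:ℝ))) ≤ ε2 := by
      have f1 : √(v2:ℝ) ≤ √((c0:ℝ)*m) := Real.sqrt_le_sqrt hv2m
      have f2 : Real.exp (-t^2 / (2*(v2:ℝ))) ≤ Real.exp (-(s^2/2)) := by
        apply Real.exp_le_exp.2
        have hts : t^2/(2*((c0:ℝ)*m)) = s^2/2 := by
          rw [ht2]; field_simp
        have g1 : t^2/(2*((c0:ℝ)*m)) ≤ t^2/(2*(v2:ℝ)) := by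
          gcongr
        rw [neg_div]
        linarith only [hts ▸ g1]
      have f3 : Real.exp (-(s^2/2)) ≤ ε2 := by
        have hlog : -(s^2/2) ≤ Real.log ε2 := by
          have h9 : Real.log ε2 = -Real.log (1/ε2) := by
            rw [one_div, Real.log_inv, neg_neg]
          rw [h9]; linarith [hs2]
        calc Real.exp (-(s^2/2)) ≤ Real.exp (Real.log ε2) := Real.exp_le_exp.2 hlog
          _ = ε2 := Real.exp_log hε20
      have f4 : √((c0:ℝ)*m) / (t * √(2*π)) = 1/(s*√(2*π)) := by
        rw [ht_def]
        field_simp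
      have f5 : (1:ℝ)/(s*√(2*π)) ≤ 1 := by
        rw [div_le_one (by positivity)]
        nlinarith only [hs1, h2π1]
      calc √(v2:ℝ) / (t * √(2*π)) * Real.exp (-t^2 / (2*(v2:ℝ)))
          ≤ √((c0:ℝ)*m) / (t * √(2*π)) * Real.exp (-(s^2/2)) := by
            apply mul_le_mul (by gcongr) f2 (Real.exp_pos _).le (by positivity)
        _ = 1/(s*√(2*π)) * Real.exp (-(s^2/2)) := by rw [f4]
        _ ≤ 1 * ε2 := by
            apply mul_le_mul f5 f3 (Real.exp_pos _).le (by norm_num)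
        _ = ε2 := one_mul _
    calc gaussianReal (-μ) v2 (Set.Ici (-((c0:ℝ)*Z)))
        ≤ ENNReal.ofReal (√(v2:ℝ) / (t * √(2*π)) * Real.exp (-t^2 / (2*(v2:ℝ)))) :=
          gauss_tail (-μ) hv20 htpos hμt
      _ ≤ ENNReal.ofReal ε2 := ENNReal.ofReal_le_ofReal hreal

end
end
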